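/- arXiv:2603.08042 — 3 statements merged into one kernel-verified Lean document; each statement's English description precedes it below -/
import Mathlib

section
/- For every t > 0 and all m, n ≥ 1, the following near-supermultiplicativity holds: 𝔼(e^{t H_{m+n}})² ≥ 𝔼(e^{t H_m}) · 𝔼(e^{t H_n}) · (𝔼(e^{t ξ_1}))^{m+n}, where 𝔼(e^{t ξ_1}) = 1 + (e^t − 1) a_0. -/
open MeasureTheory Filter Topology Set

theorem dthp_mgf_near_supermultiplicative
    {Ω : Type*} [MeasurableSpace Ω] (μ : Measure Ω) [IsProbabilityMeasure μ]
    (a : ℕ → ℝ) (ξ : ℕ → Ω → ℝ)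
    (ha_pos : ∀ i, 0 < a i)
    (ha_sum : Summable a)
    (ha_lt_one : ∑' i, a i < 1)
    (ha_moment : Summable (fun i : ℕ => (i : ℝ) * a i))
    (hmeas : ∀ n, Measurable (ξ n))
    (hval : ∀ n, 1 ≤ n → ∀ ω, ξ n ω = 0 ∨ ξ n ω = 1)
    (hinit : μ {ω | ξ 1 ω = 1} = ENNReal.ofReal (a 0))
    (hcond : ∀ n, 2 ≤ n →
      μ[ξ n | ⨆ i ∈ Finset.Icc 1 (n - 1), MeasurableSpace.comap (ξ i) Real.measurableSpace]
        =ᵐ[μ] fun ω => a 0 + ∑ i ∈ Finset.Icc 1 (n - 1), a (n - i) * ξ i ω)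
    :
    ∀ t : ℝ, 0 < t →
      (∫ ω, Real.exp (t * ξ 1 ω) ∂μ) = 1 + (Real.exp t - 1) * a 0 ∧
      ∀ m n : ℕ, 1 ≤ m → 1 ≤ n →
        (∫ ω, Real.exp (t * ∑ i ∈ Finset.Icc 1 m, ξ i ω) ∂μ) *
            (∫ ω, Real.exp (t * ∑ i ∈ Finset.Icc 1 n, ξ i ω) ∂μ) *
            (1 + (Real.exp t - 1) * a 0) ^ (m + n) ≤
          (∫ ω, Real.exp (t * ∑ i ∈ Finset.Icc 1 (m + n), ξ i ω) ∂μ) ^ 2 := by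
  intro t ht
  have het : (0:ℝ) < Real.exp t - 1 := by
    have h1 : (1:ℝ) < Real.exp t := by
      rw [← Real.exp_zero]; exact Real.exp_lt_exp.2 ht
    linarith
  set c : ℝ := 1 + (Real.exp t - 1) * a 0 with hc
  have hc1 : (1:ℝ) < c := by nlinarith [ha_pos 0]
  have hc0 : (0:ℝ) < c := by linarith
  -- basic facts about ξ
  have hξ0 : ∀ n, 1 ≤ n → ∀ ω, 0 ≤ ξ n ω := by
    intro n hn ω; rcases hval n hn ω with h | h <;> rw [h] <;> norm_num
  have hξ1 : ∀ n, 1 ≤ n → ∀ ω, ξ n ω ≤ 1 := by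
    intro n hn ω; rcases hval n hn ω with h | h <;> rw [h] <;> norm_num
  -- partial sums
  set S : ℕ → Ω → ℝ := fun k ω => ∑ i ∈ Finset.Icc 1 k, ξ i ω with hS
  set f : ℕ → Ω → ℝ := fun k ω => Real.exp (t * S k ω) with hf
  have hSmeas : ∀ k, Measurable (S k) := by
    intro k; exact Finset.measurable_sum _ fun i _ => hmeas i
  have hSnonneg : ∀ k ω, 0 ≤ S k ω := by
    intro k ω; exact Finset.sum_nonneg fun i hi => hξ0 i (Finset.mem_Icc.1 hi).1 ω
  have hSle : ∀ k ω, S k ω ≤ k := by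
    intro k ω
    calc S k ω ≤ ∑ i ∈ Finset.Icc 1 k, (1:ℝ) :=
          Finset.sum_le_sum fun i hi => hξ1 i (Finset.mem_Icc.1 hi).1 ω
      _ = (k:ℝ) := by simp [Nat.Icc_eq_range', mul_comm]
  have hfmeas : ∀ k, Measurable (f k) := by
    intro k; exact (Real.measurable_exp).comp (measurable_const.mul (hSmeas k))
  have hfone : ∀ k ω, 1 ≤ f k ω := by
    intro k ω
    exact Real.one_le_exp (mul_nonneg ht.le (hSnonneg k ω))
  have hfle : ∀ k ω, f k ω ≤ Real.exp (t * k) := by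
    intro k ω
    exact Real.exp_le_exp.2 (mul_le_mul_of_nonneg_left (hSle k ω) ht.le)
  have hfint : ∀ k, Integrable (f k) μ := by
    intro k
    refine Integrable.mono' (integrable_const (Real.exp (t * k)))
      (hfmeas k).aestronglyMeasurable (ae_of_all _ fun ω => ?_)
    rw [Real.norm_eq_abs, abs_of_pos (Real.exp_pos _)]
    exact hfle k ω
  -- exp of a 0-1 variable
  have hexp01 : ∀ n, 1 ≤ n → ∀ ω,
      Real.exp (t * ξ n ω) = 1 + (Real.exp t - 1) * ξ n ω := by
    intro n hn ω
    rcases hval n hn ω with h | h <;> simp [h]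
  -- Part 1 : the MGF of ξ 1
  have hset : MeasurableSet {ω | ξ 1 ω = 1} := (hmeas 1) (measurableSet_singleton 1)
  have hξ1eq : ∀ ω, ξ 1 ω = ({ω | ξ 1 ω = 1}).indicator (fun _ => (1:ℝ)) ω := by
    intro ω
    rcases hval 1 le_rfl ω with h | h
    · rw [h, Set.indicator_of_notMem]; simp [h]
    · rw [h, Set.indicator_of_mem]; exact h
  have hξ1int : Integrable (ξ 1) μ := by
    refine Integrable.mono' (integrable_const 1)
      (hmeas 1).aestronglyMeasurable (ae_of_all _ fun ω => ?_)
    rw [Real.norm_eq_abs, abs_of_nonneg (hξ0 1 le_rfl ω)]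
    exact hξ1 1 le_rfl ω
  have hξ1mean : ∫ ω, ξ 1 ω ∂μ = a 0 := by
    have : ∫ ω, ξ 1 ω ∂μ = ∫ ω, ({ω | ξ 1 ω = 1}).indicator (fun _ => (1:ℝ)) ω ∂μ :=
      integral_congr_ae (ae_of_all _ hξ1eq)
    rw [this, integral_indicator_const _ hset, measureReal_def, hinit, smul_eq_mul, mul_one,
      ENNReal.toReal_ofReal (ha_pos 0).le]
  have hA1 : ∫ ω, Real.exp (t * ξ 1 ω) ∂μ = c := by
    have h1 : ∫ ω, Real.exp (t * ξ 1 ω) ∂μ = ∫ ω, (1 + (Real.exp t - 1) * ξ 1 ω) ∂μ :=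
      integral_congr_ae (ae_of_all _ fun ω => hexp01 1 le_rfl ω)
    rw [h1, integral_add (integrable_const 1) (hξ1int.const_mul _),
      integral_const, integral_const_mul, hξ1mean]
    simp [hc]
  refine ⟨hA1, ?_⟩
  -- the key recursive inequality
  have key : ∀ k, 1 ≤ k → c * (∫ ω, f k ω ∂μ) ≤ ∫ ω, f (k + 1) ω ∂μ := by
    intro k hk
    set 𝔪 : MeasurableSpace Ω :=
      ⨆ i ∈ Finset.Icc 1 k, MeasurableSpace.comap (ξ i) Real.measurableSpace with h𝔪
    have hm_le : 𝔪 ≤ _ := iSup₂_le fun i _ => measurable_iff_comap_le.1 (hmeas i)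
    -- f k is 𝔪-measurable
    have hfm : StronglyMeasurable[𝔪] (f k) := by
      have hsm : Measurable[𝔪] (S k) := by
        refine Finset.measurable_sum _ fun i hi => ?_
        refine measurable_iff_comap_le.2 ?_
        rw [h𝔪]
        exact le_iSup₂ (f := fun i _ => MeasurableSpace.comap (ξ i) Real.measurableSpace) i hi
      exact ((Real.measurable_exp).comp (measurable_const.mul hsm)).stronglyMeasurable
    have hξint : Integrable (ξ (k + 1)) μ := by
      refine Integrable.mono' (integrable_const 1)
        (hmeas (k + 1)).aestronglyMeasurable (ae_of_all _ fun ω => ?_)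
      rw [Real.norm_eq_abs, abs_of_nonneg (hξ0 (k + 1) (by omega) ω)]
      exact hξ1 (k + 1) (by omega) ω
    have hprod_int : Integrable (f k * ξ (k + 1)) μ := by
      refine Integrable.mono' (hfint k)
        ((hfmeas k).mul (hmeas (k + 1))).aestronglyMeasurable (ae_of_all _ fun ω => ?_)
      have h0 : (0:ℝ) < f k ω := lt_of_lt_of_le one_pos (hfone k ω)
      rw [Pi.mul_apply, Real.norm_eq_abs, abs_mul, abs_of_pos h0,
        abs_of_nonneg (hξ0 (k + 1) (by omega) ω)]
      calc f k ω * ξ (k + 1) ω ≤ f k ω * 1 :=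
            mul_le_mul_of_nonneg_left (hξ1 (k + 1) (by omega) ω) h0.le
        _ = f k ω := mul_one _
    have hcond' : μ[ξ (k + 1) | 𝔪] =ᵐ[μ]
        fun ω => a 0 + ∑ i ∈ Finset.Icc 1 k, a (k + 1 - i) * ξ i ω := by
      have h := hcond (k + 1) (by omega)
      simp only [Nat.add_sub_cancel] at h
      rw [h𝔪]
      exact h
    -- pull-out property
    have hpull : ∫ ω, f k ω * ξ (k + 1) ω ∂μ
        = ∫ ω, f k ω * (μ[ξ (k + 1) | 𝔪]) ω ∂μ := by
      have h1 : ∫ ω, f k ω * ξ (k + 1) ω ∂μ = ∫ ω, (μ[f k * ξ (k + 1) | 𝔪]) ω ∂μ :=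
        (integral_condExp (f := f k * ξ (k + 1)) hm_le).symm
      have h2 : μ[f k * ξ (k + 1) | 𝔪] =ᵐ[μ] f k * μ[ξ (k + 1) | 𝔪] :=
        condExp_mul_of_stronglyMeasurable_left hfm hprod_int hξint
      rw [h1]
      exact integral_congr_ae h2
    have hBdef : ∫ ω, f k ω * (μ[ξ (k + 1) | 𝔪]) ω ∂μ
        = ∫ ω, f k ω * (a 0 + ∑ i ∈ Finset.Icc 1 k, a (k + 1 - i) * ξ i ω) ∂μ :=
      integral_congr_ae (hcond'.mono fun ω h => by dsimp only; rw [h])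
    -- lower bound on the conditional term
    have hlow : a 0 * ∫ ω, f k ω ∂μ
        ≤ ∫ ω, f k ω * (a 0 + ∑ i ∈ Finset.Icc 1 k, a (k + 1 - i) * ξ i ω) ∂μ := by
      have hint2 : Integrable
          (fun ω => f k ω * (a 0 + ∑ i ∈ Finset.Icc 1 k, a (k + 1 - i) * ξ i ω)) μ := by
        set B : ℝ := a 0 + ∑ i ∈ Finset.Icc 1 k, a (k + 1 - i) with hB
        have hB0 : 0 < B := by
          have : 0 ≤ ∑ i ∈ Finset.Icc 1 k, a (k + 1 - i) :=
            Finset.sum_nonneg fun i _ => (ha_pos _).le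
          have := ha_pos 0; positivity
        refine Integrable.mono' (integrable_const (Real.exp (t * k) * B))
          (((hfmeas k).mul (measurable_const.add
            (Finset.measurable_sum _ fun i _ => measurable_const.mul (hmeas i)))).aestronglyMeasurable)
          (ae_of_all _ fun ω => ?_)
        have hsum0 : 0 ≤ ∑ i ∈ Finset.Icc 1 k, a (k + 1 - i) * ξ i ω :=
          Finset.sum_nonneg fun i hi =>
            mul_nonneg (ha_pos _).le (hξ0 i (Finset.mem_Icc.1 hi).1 ω)
        have hsumB : a 0 + ∑ i ∈ Finset.Icc 1 k, a (k + 1 - i) * ξ i ω ≤ B := by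
          rw [hB]
          refine add_le_add (le_refl _) (Finset.sum_le_sum fun i hi => ?_)
          calc a (k + 1 - i) * ξ i ω ≤ a (k + 1 - i) * 1 :=
                mul_le_mul_of_nonneg_left (hξ1 i (Finset.mem_Icc.1 hi).1 ω) (ha_pos _).le
            _ = a (k + 1 - i) := mul_one _
        have h0 : (0:ℝ) < f k ω := lt_of_lt_of_le one_pos (hfone k ω)
        rw [Real.norm_eq_abs, abs_of_nonneg
          (mul_nonneg h0.le (by linarith [ha_pos 0]))]
        exact mul_le_mul (hfle k ω) hsumB (by linarith [ha_pos 0]) (Real.exp_pos _).le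
      calc a 0 * ∫ ω, f k ω ∂μ = ∫ ω, a 0 * f k ω ∂μ := (integral_const_mul _ _).symm
        _ ≤ ∫ ω, f k ω * (a 0 + ∑ i ∈ Finset.Icc 1 k, a (k + 1 - i) * ξ i ω) ∂μ := by
            refine integral_mono ((hfint k).const_mul _) hint2 fun ω => ?_
            have h0 : (0:ℝ) ≤ f k ω := le_trans zero_le_one (hfone k ω)
            have hsum0 : 0 ≤ ∑ i ∈ Finset.Icc 1 k, a (k + 1 - i) * ξ i ω :=
              Finset.sum_nonneg fun i hi =>
                mul_nonneg (ha_pos _).le (hξ0 i (Finset.mem_Icc.1 hi).1 ω)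
            calc a 0 * f k ω = f k ω * a 0 := mul_comm _ _
              _ ≤ f k ω * (a 0 + ∑ i ∈ Finset.Icc 1 k, a (k + 1 - i) * ξ i ω) :=
                  mul_le_mul_of_nonneg_left (by linarith) h0
    -- split f (k+1)
    have hsplit : ∀ ω, f (k + 1) ω = f k ω + (Real.exp t - 1) * (f k ω * ξ (k + 1) ω) := by
      intro ω
      have hs : S (k + 1) ω = S k ω + ξ (k + 1) ω := by
        rw [hS]
        exact Finset.sum_Icc_succ_top (by omega) _
      have : f (k + 1) ω = f k ω * Real.exp (t * ξ (k + 1) ω) := by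
        simp only [hf]
        rw [hs, mul_add, Real.exp_add]
      rw [this, hexp01 (k + 1) (by omega) ω]
      ring
    have hAsplit : ∫ ω, f (k + 1) ω ∂μ
        = (∫ ω, f k ω ∂μ) + (Real.exp t - 1) * ∫ ω, f k ω * ξ (k + 1) ω ∂μ := by
      have hpint : Integrable (fun ω => f k ω * ξ (k + 1) ω) μ := hprod_int
      rw [integral_congr_ae (ae_of_all _ hsplit),
        integral_add (hfint k) ((hpint.const_mul _)), integral_const_mul]
    rw [hAsplit, hpull, hBdef]
    have := mul_le_mul_of_nonneg_left hlow het.le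
    rw [hc]; nlinarith [this]
  -- iterate
  have iter : ∀ k j, 1 ≤ k → c ^ j * (∫ ω, f k ω ∂μ) ≤ ∫ ω, f (k + j) ω ∂μ := by
    intro k j hk
    induction j with
    | zero => simp
    | succ j ih =>
      have h1 := key (k + j) (by omega)
      calc c ^ (j + 1) * ∫ ω, f k ω ∂μ = c * (c ^ j * ∫ ω, f k ω ∂μ) := by ring
        _ ≤ c * ∫ ω, f (k + j) ω ∂μ := mul_le_mul_of_nonneg_left ih hc0.le
        _ ≤ ∫ ω, f (k + j + 1) ω ∂μ := h1
        _ = ∫ ω, f (k + (j + 1)) ω ∂μ := by ring_nf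
  have hApos : ∀ k, (1:ℝ) ≤ ∫ ω, f k ω ∂μ := by
    intro k
    calc (1:ℝ) = ∫ _ω, (1:ℝ) ∂μ := by simp
      _ ≤ ∫ ω, f k ω ∂μ := integral_mono (integrable_const 1) (hfint k) (hfone k)
  intro m n hm hn
  have h1 : c ^ n * (∫ ω, f m ω ∂μ) ≤ ∫ ω, f (m + n) ω ∂μ := iter m n hm
  have h2 : c ^ m * (∫ ω, f n ω ∂μ) ≤ ∫ ω, f (m + n) ω ∂μ := by
    have := iter n m hn
    rwa [Nat.add_comm n m] at this
  have hfm0 : (0:ℝ) ≤ ∫ ω, f m ω ∂μ := le_trans zero_le_one (hApos m)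
  have hfn0 : (0:ℝ) ≤ ∫ ω, f n ω ∂μ := le_trans zero_le_one (hApos n)
  calc (∫ ω, Real.exp (t * ∑ i ∈ Finset.Icc 1 m, ξ i ω) ∂μ) *
          (∫ ω, Real.exp (t * ∑ i ∈ Finset.Icc 1 n, ξ i ω) ∂μ) * c ^ (m + n)
      = (c ^ n * (∫ ω, f m ω ∂μ)) * (c ^ m * (∫ ω, f n ω ∂μ)) := by
        simp only [hf, hS, pow_add]; ring
    _ ≤ (∫ ω, f (m + n) ω ∂μ) * (∫ ω, f (m + n) ω ∂μ) := by
        refine mul_le_mul h1 h2 (by positivity) ?_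
        exact le_trans (by positivity) h1
    _ = (∫ ω, Real.exp (t * ∑ i ∈ Finset.Icc 1 (m + n), ξ i ω) ∂μ) ^ 2 := by
        simp only [hf, hS]; ring
end

section
/- For every t ∈ ℝ, liminf_{n→∞} 𝔼(e^{t H_{n+1}}) / 𝔼(e^{t H_n}) ≥ 1 + (e^t − 1) · a_0 / (1 − Σ_{i=1}^∞ a_i). -/
open MeasureTheory Filter Topology Set

namespace DTHP

set_option linter.unusedSectionVars false

variable {Ω : Type*} [mΩ : MeasurableSpace Ω] {μ : Measure Ω} [IsProbabilityMeasure μ]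
  {a : ℕ → ℝ} {ξ : ℕ → Ω → ℝ}

noncomputable def bval (b : Bool) : ℝ := if b then 1 else 0

lemma bval_mono : Monotone bval := by
  intro x y h
  cases x <;> cases y <;> simp [bval] <;> exact absurd h (by decide)

lemma bval_nonneg (b : Bool) : 0 ≤ bval b := by cases b <;> simp [bval]

lemma bval_le_one (b : Bool) : bval b ≤ 1 := by cases b <;> simp [bval]

noncomputable def bvec (ξ : ℕ → Ω → ℝ) (m : ℕ) (ω : Ω) : Fin m → Bool :=
  fun i => decide (ξ (i.1 + 1) ω = 1)

lemma xi_eq_bval (hval : ∀ n, 1 ≤ n → ∀ ω, ξ n ω = 0 ∨ ξ n ω = 1)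
    {i : ℕ} (hi : 1 ≤ i) (ω : Ω) : ξ i ω = bval (decide (ξ i ω = 1)) := by
  rcases hval i hi ω with h | h <;> simp [h, bval]

lemma bvec_succ (m : ℕ) (ω : Ω) :
    bvec ξ (m + 1) ω = Fin.snoc (bvec ξ m ω) (decide (ξ (m + 1) ω = 1)) := by
  funext i
  refine Fin.lastCases ?_ (fun j => ?_) i
  · simp [bvec, Fin.snoc]
  · simp [bvec, Fin.snoc, Fin.castSucc]

lemma meas_comp {m : ℕ} {m' : MeasurableSpace Ω}
    (h : ∀ i ∈ Finset.Icc 1 m, Measurable[m'] (ξ i))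
    (H : (Fin m → Bool) → ℝ) : Measurable[m'] (fun ω => H (bvec ξ m ω)) := by
  have hb : Measurable[m'] (bvec ξ m) := by
    refine measurable_pi_lambda _ (fun i => ?_)
    simp only [bvec]
    refine measurable_to_countable' (fun y => ?_)
    have hi : Measurable[m'] (ξ (i.1 + 1)) :=
      h _ (Finset.mem_Icc.2 ⟨Nat.le_add_left _ _, by omega⟩)
    cases y
    · have : (fun ω => decide (ξ (i.1+1) ω = 1)) ⁻¹' {false}
          = {ω | ξ (i.1+1) ω = 1}ᶜ := by
        ext ω; simp
      rw [this]
      exact (hi (measurableSet_singleton 1)).compl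
    · have : (fun ω => decide (ξ (i.1+1) ω = 1)) ⁻¹' {true}
          = {ω | ξ (i.1+1) ω = 1} := by
        ext ω; simp
      rw [this]
      exact hi (measurableSet_singleton 1)
  exact (measurable_of_countable H).comp hb

lemma comp_bound {m : ℕ} (H : (Fin m → Bool) → ℝ) :
    ∃ C, 0 ≤ C ∧ ∀ ω : Ω, |H (bvec ξ m ω)| ≤ C := by
  have hne : (Finset.univ : Finset (Fin m → Bool)).Nonempty := Finset.univ_nonempty
  refine ⟨Finset.sup' Finset.univ hne (fun b => |H b|), ?_, fun ω => ?_⟩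
  · exact le_trans (abs_nonneg (H (fun _ => false)))
      (Finset.le_sup' (fun b => |H b|) (Finset.mem_univ _))
  · exact Finset.le_sup' (fun b => |H b|) (Finset.mem_univ _)

lemma integrable_of_bdd {f : Ω → ℝ} (hf : Measurable f) {C : ℝ} (h : ∀ ω, |f ω| ≤ C) :
    Integrable f μ :=
  (integrable_const C).mono' hf.aestronglyMeasurable (ae_of_all _ h)

lemma sum_Icc_fin (m : ℕ) (c : ℕ → ℝ) :
    ∑ i ∈ Finset.Icc 1 m, c i = ∑ j : Fin m, c (j.1 + 1) := by
  rw [Fin.sum_univ_eq_sum_range (fun j => c (j + 1)) m]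
  rw [← Finset.Ico_add_one_right_eq_Icc, Finset.sum_Ico_eq_sum_range]
  simp [add_comm]


lemma int_xi_one (hval : ∀ n, 1 ≤ n → ∀ ω, ξ n ω = 0 ∨ ξ n ω = 1)
    (hmeas : ∀ n, Measurable (ξ n)) (ha0 : 0 ≤ a 0)
    (hinit : μ {ω | ξ 1 ω = 1} = ENNReal.ofReal (a 0)) :
    ∫ ω, ξ 1 ω ∂μ = a 0 := by
  have hs : MeasurableSet {ω | ξ 1 ω = 1} := hmeas 1 (measurableSet_singleton 1)
  have h1 : ξ 1 = Set.indicator {ω | ξ 1 ω = 1} (fun _ => (1:ℝ)) := by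
    funext ω
    rcases hval 1 le_rfl ω with h | h
    · rw [h, Set.indicator_of_notMem]
      simp [Set.mem_setOf_eq, h]
    · rw [h, Set.indicator_of_mem]
      exact h
  rw [h1, integral_indicator_const (1:ℝ) hs, measureReal_def, hinit, smul_eq_mul, mul_one,
    ENNReal.toReal_ofReal ha0]

lemma xi_abs_le_one (hval : ∀ n, 1 ≤ n → ∀ ω, ξ n ω = 0 ∨ ξ n ω = 1)
    {i : ℕ} (hi : 1 ≤ i) (ω : Ω) : |ξ i ω| ≤ 1 := by
  rcases hval i hi ω with h | h <;> simp [h]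

lemma key_int (hval : ∀ n, 1 ≤ n → ∀ ω, ξ n ω = 0 ∨ ξ n ω = 1)
    (hmeas : ∀ n, Measurable (ξ n)) (ha0 : 0 ≤ a 0)
    (hinit : μ {ω | ξ 1 ω = 1} = ENNReal.ofReal (a 0))
    (hcond : ∀ n, 2 ≤ n →
      μ[ξ n | ⨆ i ∈ Finset.Icc 1 (n - 1), MeasurableSpace.comap (ξ i) Real.measurableSpace]
        =ᵐ[μ] fun ω => a 0 + ∑ i ∈ Finset.Icc 1 (n - 1), a (n - i) * ξ i ω)
    (m : ℕ) (H : (Fin m → Bool) → ℝ) :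
    ∫ ω, H (bvec ξ m ω) * ξ (m+1) ω ∂μ
      = ∫ ω, H (bvec ξ m ω) * (a 0 + ∑ i ∈ Finset.Icc 1 m, a (m+1-i) * ξ i ω) ∂μ := by
  rcases Nat.eq_zero_or_pos m with hm | hm
  · subst hm
    have hc : ∀ ω : Ω, H (bvec ξ 0 ω) = H (fun i => i.elim0) :=
      fun ω => congrArg H (Subsingleton.elim _ _)
    have he : Finset.Icc 1 0 = (∅ : Finset ℕ) := by decide
    simp only [hc, he, Finset.sum_empty, add_zero]
    rw [integral_const_mul, integral_const_mul, int_xi_one hval hmeas ha0 hinit,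
      integral_const]
    simp
  · set Fm := ⨆ i ∈ Finset.Icc 1 m, MeasurableSpace.comap (ξ i) Real.measurableSpace with hFm
    have hle : Fm ≤ mΩ := by
      refine iSup_le fun i => iSup_le fun _ => ?_
      exact (hmeas i).comap_le
    haveI : SigmaFinite (μ.trim hle) := by infer_instance
    have hximeas : ∀ i ∈ Finset.Icc 1 m, Measurable[Fm] (ξ i) := fun i hi =>
      measurable_iff_comap_le.2
        (le_biSup (fun i => MeasurableSpace.comap (ξ i) Real.measurableSpace) hi)
    have hHsm : StronglyMeasurable[Fm] (fun ω => H (bvec ξ m ω)) :=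
      (meas_comp hximeas H).stronglyMeasurable
    have hHm : Measurable[mΩ] (fun ω => H (bvec ξ m ω)) :=
      meas_comp (fun i _ => hmeas i) H
    obtain ⟨C, hC0, hC⟩ := comp_bound (ξ := ξ) (Ω := Ω) H
    have hb1 : ∀ ω, |ξ (m+1) ω| ≤ 1 := fun ω => xi_abs_le_one hval (by omega) ω
    have hgint : Integrable (ξ (m+1)) μ := integrable_of_bdd (mΩ := mΩ) (hmeas _) hb1
    have hfgint : Integrable ((fun ω => H (bvec ξ m ω)) * ξ (m+1)) μ := by
      refine integrable_of_bdd (mΩ := mΩ) (hHm.mul (hmeas _)) (C := C) (fun ω => ?_)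
      calc |H (bvec ξ m ω) * ξ (m+1) ω| = |H (bvec ξ m ω)| * |ξ (m+1) ω| := abs_mul _ _
        _ ≤ C * 1 := mul_le_mul (hC ω) (hb1 ω) (abs_nonneg _) hC0
        _ = C := mul_one C
    have h2 := condExp_mul_of_stronglyMeasurable_left (μ := μ) hHsm hfgint hgint
    have h3 := hcond (m+1) (by omega)
    simp only [Nat.add_sub_cancel] at h3
    rw [← hFm] at h3
    calc ∫ ω, H (bvec ξ m ω) * ξ (m+1) ω ∂μ
        = ∫ ω, ((fun ω => H (bvec ξ m ω)) * ξ (m+1)) ω ∂μ := rfl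
      _ = ∫ ω, (μ[(fun ω => H (bvec ξ m ω)) * ξ (m+1)|Fm]) ω ∂μ :=
          (integral_condExp hle).symm
      _ = ∫ ω, H (bvec ξ m ω) * (a 0 + ∑ i ∈ Finset.Icc 1 m, a (m+1-i) * ξ i ω) ∂μ := by
          refine integral_congr_ae ?_
          filter_upwards [h2, h3] with ω h2ω h3ω
          rw [h2ω]
          simp only [Pi.mul_apply]
          rw [h3ω]

noncomputable def Qf (a : ℕ → ℝ) (m : ℕ) (b : Fin m → Bool) : ℝ :=
  a 0 + ∑ j : Fin m, a (m - j.1) * bval (b j)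

lemma Qf_nonneg (ha_pos : ∀ i, 0 < a i) (m : ℕ) (b : Fin m → Bool) : 0 ≤ Qf a m b := by
  have h1 : ∀ j : Fin m, 0 ≤ a (m - j.1) * bval (b j) :=
    fun j => mul_nonneg (ha_pos _).le (bval_nonneg _)
  have h2 : 0 ≤ ∑ j : Fin m, a (m - j.1) * bval (b j) :=
    Finset.sum_nonneg (fun j _ => h1 j)
  have h0 := (ha_pos 0).le
  unfold Qf
  linarith

lemma Qf_lt_one (ha_pos : ∀ i, 0 < a i) (ha_sum : Summable a)
    (ha_lt_one : ∑' i, a i < 1) (m : ℕ) (b : Fin m → Bool) : Qf a m b < 1 := by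
  have hsum1 : Summable (fun j : ℕ => a (j + 1)) := (summable_nat_add_iff 1).2 ha_sum
  have h1 : ∑ j : Fin m, a (m - j.1) * bval (b j) ≤ ∑ j : Fin m, a (m - j.1) := by
    refine Finset.sum_le_sum (fun j _ => ?_)
    have := bval_le_one (b j)
    nlinarith [(ha_pos (m - j.1)).le, bval_nonneg (b j)]
  have h2 : ∑ j : Fin m, a (m - j.1) = ∑ j ∈ Finset.range m, a (j + 1) := by
    rw [Fin.sum_univ_eq_sum_range (fun j => a (m - j)) m,
      ← Finset.sum_range_reflect (fun j => a (j + 1)) m]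
    refine Finset.sum_congr rfl (fun j hj => ?_)
    have hj' := Finset.mem_range.1 hj
    congr 1
    omega
  have h3 : ∑ j ∈ Finset.range m, a (j + 1) ≤ ∑' j, a (j + 1) :=
    Summable.sum_le_tsum _ (fun j _ => (ha_pos _).le) hsum1
  have h4 : a 0 + ∑' j, a (j + 1) = ∑' i, a i := (Summable.tsum_eq_zero_add ha_sum).symm
  unfold Qf
  linarith

lemma Qf_mono (ha_pos : ∀ i, 0 < a i) (m : ℕ) : Monotone (Qf a m) := by
  intro b b' h
  unfold Qf
  have : ∀ j : Fin m, a (m - j.1) * bval (b j) ≤ a (m - j.1) * bval (b' j) :=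
    fun j => mul_le_mul_of_nonneg_left (bval_mono (h j)) (ha_pos _).le
  have := Finset.sum_le_sum (fun j (_ : j ∈ Finset.univ) => this j)
  linarith

lemma snoc_le_snoc {m : ℕ} {b b' : Fin m → Bool} (h : b ≤ b') {x y : Bool} (hxy : x ≤ y) :
    Fin.snoc b x ≤ (Fin.snoc b' y : Fin (m+1) → Bool) := by
  intro i
  refine Fin.lastCases ?_ (fun j => ?_) i
  · simpa using hxy
  · simpa using h j

lemma PQ (hval : ∀ n, 1 ≤ n → ∀ ω, ξ n ω = 0 ∨ ξ n ω = 1) (m : ℕ) (ω : Ω) :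
    a 0 + ∑ i ∈ Finset.Icc 1 m, a (m + 1 - i) * ξ i ω = Qf a m (bvec ξ m ω) := by
  rw [sum_Icc_fin m (fun i => a (m + 1 - i) * ξ i ω)]
  unfold Qf
  congr 1
  refine Finset.sum_congr rfl (fun j _ => ?_)
  have h1 : a (m + 1 - (j.1 + 1)) = a (m - j.1) := by congr 1; omega
  have h2 : ξ (j.1 + 1) ω = bval (bvec ξ m ω j) := xi_eq_bval hval (by omega) ω
  rw [h1, h2]

lemma comp_succ_decomp (hval : ∀ n, 1 ≤ n → ∀ ω, ξ n ω = 0 ∨ ξ n ω = 1)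
    (m : ℕ) (F : (Fin (m+1) → Bool) → ℝ) (ω : Ω) :
    F (bvec ξ (m+1) ω)
      = F (Fin.snoc (bvec ξ m ω) false)
        + ξ (m+1) ω * (F (Fin.snoc (bvec ξ m ω) true) - F (Fin.snoc (bvec ξ m ω) false)) := by
  rw [bvec_succ]
  rcases hval (m+1) (by omega) ω with h | h
  · have hd : decide (ξ (m+1) ω = 1) = false := decide_eq_false (by rw [h]; norm_num)
    rw [hd, h]
    ring
  · have hd : decide (ξ (m+1) ω = 1) = true := decide_eq_true h
    rw [hd, h]
    ring

lemma int_comp_succ (hval : ∀ n, 1 ≤ n → ∀ ω, ξ n ω = 0 ∨ ξ n ω = 1)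
    (hmeas : ∀ n, Measurable (ξ n)) (ha_pos : ∀ i, 0 < a i)
    (hinit : μ {ω | ξ 1 ω = 1} = ENNReal.ofReal (a 0))
    (hcond : ∀ n, 2 ≤ n →
      μ[ξ n | ⨆ i ∈ Finset.Icc 1 (n - 1), MeasurableSpace.comap (ξ i) Real.measurableSpace]
        =ᵐ[μ] fun ω => a 0 + ∑ i ∈ Finset.Icc 1 (n - 1), a (n - i) * ξ i ω)
    (m : ℕ) (F : (Fin (m+1) → Bool) → ℝ) :
    ∫ ω, F (bvec ξ (m+1) ω) ∂μ
      = ∫ ω, ((1 - Qf a m (bvec ξ m ω)) * F (Fin.snoc (bvec ξ m ω) false)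
          + Qf a m (bvec ξ m ω) * F (Fin.snoc (bvec ξ m ω) true)) ∂μ := by
  have hint0 : Integrable (fun ω => F (Fin.snoc (bvec ξ m ω) false)) μ := by
    obtain ⟨C, hC0, hC⟩ := comp_bound (ξ := ξ) (Ω := Ω) (fun b => F (Fin.snoc b false))
    exact integrable_of_bdd (mΩ := mΩ)
      (meas_comp (fun i _ => hmeas i) (fun b => F (Fin.snoc b false))) hC
  have hintH : Integrable
      (fun ω => (fun b => F (Fin.snoc b true) - F (Fin.snoc b false)) (bvec ξ m ω)
        * ξ (m+1) ω) μ := by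
    obtain ⟨C, hC0, hC⟩ := comp_bound (ξ := ξ) (Ω := Ω)
      (fun b => F (Fin.snoc b true) - F (Fin.snoc b false))
    refine integrable_of_bdd (mΩ := mΩ)
      ((meas_comp (fun i _ => hmeas i)
        (fun b => F (Fin.snoc b true) - F (Fin.snoc b false))).mul (hmeas (m+1)))
      (C := C) (fun ω => ?_)
    calc |(fun b => F (Fin.snoc b true) - F (Fin.snoc b false)) (bvec ξ m ω) * ξ (m+1) ω|
        = |(fun b => F (Fin.snoc b true) - F (Fin.snoc b false)) (bvec ξ m ω)|
            * |ξ (m+1) ω| := abs_mul _ _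
      _ ≤ C * 1 := mul_le_mul (hC ω) (xi_abs_le_one hval (by omega) ω) (abs_nonneg _) hC0
      _ = C := mul_one C
  have hintQ : Integrable
      (fun ω => (fun b => (F (Fin.snoc b true) - F (Fin.snoc b false)) * Qf a m b)
        (bvec ξ m ω)) μ := by
    obtain ⟨C, hC0, hC⟩ := comp_bound (ξ := ξ) (Ω := Ω)
      (fun b => (F (Fin.snoc b true) - F (Fin.snoc b false)) * Qf a m b)
    exact integrable_of_bdd (mΩ := mΩ)
      (meas_comp (fun i _ => hmeas i)
        (fun b => (F (Fin.snoc b true) - F (Fin.snoc b false)) * Qf a m b)) hC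
  have step1 : (fun ω => F (bvec ξ (m+1) ω))
      = fun ω => F (Fin.snoc (bvec ξ m ω) false)
          + (fun b => F (Fin.snoc b true) - F (Fin.snoc b false)) (bvec ξ m ω)
            * ξ (m+1) ω := by
    funext ω
    have := comp_succ_decomp hval m F ω
    simpa [mul_comm] using this
  rw [step1, integral_add hint0 hintH,
    key_int hval hmeas (ha_pos 0).le hinit hcond m
      (fun b => F (Fin.snoc b true) - F (Fin.snoc b false))]
  have step2 : (fun ω => (fun b => F (Fin.snoc b true) - F (Fin.snoc b false)) (bvec ξ m ω)
        * (a 0 + ∑ i ∈ Finset.Icc 1 m, a (m + 1 - i) * ξ i ω))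
      = fun ω => (fun b => (F (Fin.snoc b true) - F (Fin.snoc b false)) * Qf a m b)
        (bvec ξ m ω) := by
    funext ω
    simp only
    rw [PQ hval m ω]
  rw [step2, ← integral_add hint0 hintQ]
  refine integral_congr_ae (Eventually.of_forall (fun ω => ?_))
  simp only
  ring

lemma assoc (hval : ∀ n, 1 ≤ n → ∀ ω, ξ n ω = 0 ∨ ξ n ω = 1)
    (hmeas : ∀ n, Measurable (ξ n)) (ha_pos : ∀ i, 0 < a i)
    (ha_sum : Summable a) (ha_lt_one : ∑' i, a i < 1)
    (hinit : μ {ω | ξ 1 ω = 1} = ENNReal.ofReal (a 0))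
    (hcond : ∀ n, 2 ≤ n →
      μ[ξ n | ⨆ i ∈ Finset.Icc 1 (n - 1), MeasurableSpace.comap (ξ i) Real.measurableSpace]
        =ᵐ[μ] fun ω => a 0 + ∑ i ∈ Finset.Icc 1 (n - 1), a (n - i) * ξ i ω) :
    ∀ (m : ℕ) (F G : (Fin m → Bool) → ℝ), Monotone F → Monotone G →
      (∫ ω, F (bvec ξ m ω) ∂μ) * (∫ ω, G (bvec ξ m ω) ∂μ)
        ≤ ∫ ω, F (bvec ξ m ω) * G (bvec ξ m ω) ∂μ := by
  intro m
  induction m with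
  | zero =>
    intro F G _ _
    have hF : ∀ ω : Ω, F (bvec ξ 0 ω) = F (fun i => i.elim0) :=
      fun ω => congrArg F (Subsingleton.elim _ _)
    have hG : ∀ ω : Ω, G (bvec ξ 0 ω) = G (fun i => i.elim0) :=
      fun ω => congrArg G (Subsingleton.elim _ _)
    simp only [hF, hG, integral_const, measure_univ, ENNReal.toReal_one, measureReal_def, one_smul, le_refl]
  | succ m ih =>
    intro F G hF hG
    set X := bvec ξ m with hX
    set q := Qf a m with hq
    -- abbreviations
    set F0 : (Fin m → Bool) → ℝ := fun b => F (Fin.snoc b false) with hF0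
    set F1 : (Fin m → Bool) → ℝ := fun b => F (Fin.snoc b true) with hF1
    set G0 : (Fin m → Bool) → ℝ := fun b => G (Fin.snoc b false) with hG0
    set G1 : (Fin m → Bool) → ℝ := fun b => G (Fin.snoc b true) with hG1
    have hq0 : ∀ b, 0 ≤ q b := Qf_nonneg ha_pos m
    have hq1 : ∀ b, q b ≤ 1 := fun b => (Qf_lt_one ha_pos ha_sum ha_lt_one m b).le
    have hqm : Monotone q := Qf_mono ha_pos m
    have hF01 : ∀ b, F0 b ≤ F1 b := fun b => hF (snoc_le_snoc le_rfl (by simp))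
    have hG01 : ∀ b, G0 b ≤ G1 b := fun b => hG (snoc_le_snoc le_rfl (by simp))
    have hF0m : Monotone F0 := fun b b' h => hF (snoc_le_snoc h le_rfl)
    have hF1m : Monotone F1 := fun b b' h => hF (snoc_le_snoc h le_rfl)
    have hG0m : Monotone G0 := fun b b' h => hG (snoc_le_snoc h le_rfl)
    have hG1m : Monotone G1 := fun b b' h => hG (snoc_le_snoc h le_rfl)
    set F' : (Fin m → Bool) → ℝ := fun b => (1 - q b) * F0 b + q b * F1 b with hF'
    set G' : (Fin m → Bool) → ℝ := fun b => (1 - q b) * G0 b + q b * G1 b with hG'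
    have hF'm : Monotone F' := by
      intro b b' h
      have e1 : 0 ≤ (1 - q b') * (F0 b' - F0 b) :=
        mul_nonneg (by linarith [hq1 b']) (by linarith [hF0m h])
      have e2 : 0 ≤ q b' * (F1 b' - F1 b) :=
        mul_nonneg (hq0 b') (by linarith [hF1m h])
      have e3 : 0 ≤ (q b' - q b) * (F1 b - F0 b) :=
        mul_nonneg (by linarith [hqm h]) (by linarith [hF01 b])
      simp only [hF']
      nlinarith [e1, e2, e3]
    have hG'm : Monotone G' := by
      intro b b' h
      have e1 : 0 ≤ (1 - q b') * (G0 b' - G0 b) :=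
        mul_nonneg (by linarith [hq1 b']) (by linarith [hG0m h])
      have e2 : 0 ≤ q b' * (G1 b' - G1 b) :=
        mul_nonneg (hq0 b') (by linarith [hG1m h])
      have e3 : 0 ≤ (q b' - q b) * (G1 b - G0 b) :=
        mul_nonneg (by linarith [hqm h]) (by linarith [hG01 b])
      simp only [hG']
      nlinarith [e1, e2, e3]
    have intF := int_comp_succ (μ := μ) hval hmeas ha_pos hinit hcond m F
    have intG := int_comp_succ (μ := μ) hval hmeas ha_pos hinit hcond m G
    have intFG := int_comp_succ (μ := μ) hval hmeas ha_pos hinit hcond m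
      (fun v => F v * G v)
    -- rewrite each as integral of composed function
    have intF' : ∫ ω, F (bvec ξ (m+1) ω) ∂μ = ∫ ω, F' (X ω) ∂μ := intF
    have intG' : ∫ ω, G (bvec ξ (m+1) ω) ∂μ = ∫ ω, G' (X ω) ∂μ := intG
    have intFG' : ∫ ω, F (bvec ξ (m+1) ω) * G (bvec ξ (m+1) ω) ∂μ
        = ∫ ω, ((1 - q (X ω)) * (F0 (X ω) * G0 (X ω))
            + q (X ω) * (F1 (X ω) * G1 (X ω))) ∂μ := intFG
    have pointwise : ∀ b, F' b * G' b
        ≤ (1 - q b) * (F0 b * G0 b) + q b * (F1 b * G1 b) := by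
      intro b
      have e : 0 ≤ q b * (1 - q b) * ((F1 b - F0 b) * (G1 b - G0 b)) :=
        mul_nonneg (mul_nonneg (hq0 b) (by linarith [hq1 b]))
          (mul_nonneg (by linarith [hF01 b]) (by linarith [hG01 b]))
      simp only [hF', hG']
      nlinarith [e]
    have hmono : ∫ ω, (fun b => F' b * G' b) (X ω) ∂μ
        ≤ ∫ ω, (fun b => (1 - q b) * (F0 b * G0 b) + q b * (F1 b * G1 b)) (X ω) ∂μ := by
      refine integral_mono ?_ ?_ (fun ω => pointwise (X ω))
      · obtain ⟨C, hC0, hC⟩ := comp_bound (ξ := ξ) (Ω := Ω) (fun b => F' b * G' b)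
        exact integrable_of_bdd (mΩ := mΩ)
          (meas_comp (fun i _ => hmeas i) (fun b => F' b * G' b)) hC
      · obtain ⟨C, hC0, hC⟩ := comp_bound (ξ := ξ) (Ω := Ω)
          (fun b => (1 - q b) * (F0 b * G0 b) + q b * (F1 b * G1 b))
        exact integrable_of_bdd (mΩ := mΩ)
          (meas_comp (fun i _ => hmeas i)
            (fun b => (1 - q b) * (F0 b * G0 b) + q b * (F1 b * G1 b))) hC
    calc (∫ ω, F (bvec ξ (m+1) ω) ∂μ) * ∫ ω, G (bvec ξ (m+1) ω) ∂μ
        = (∫ ω, F' (X ω) ∂μ) * ∫ ω, G' (X ω) ∂μ := by rw [intF', intG']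
      _ ≤ ∫ ω, F' (X ω) * G' (X ω) ∂μ := ih F' G' hF'm hG'm
      _ ≤ ∫ ω, ((1 - q (X ω)) * (F0 (X ω) * G0 (X ω))
            + q (X ω) * (F1 (X ω) * G1 (X ω))) ∂μ := hmono
      _ = ∫ ω, F (bvec ξ (m+1) ω) * G (bvec ξ (m+1) ω) ∂μ := intFG'.symm


lemma sum_Icc_reflect (m : ℕ) (f : ℕ → ℝ) :
    ∑ i ∈ Finset.Icc 1 m, f i = ∑ i ∈ Finset.Icc 1 m, f (m + 1 - i) := by
  rw [sum_Icc_fin m f, sum_Icc_fin m (fun i => f (m + 1 - i))]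
  rw [Fin.sum_univ_eq_sum_range (fun j => f (j + 1)) m,
    Fin.sum_univ_eq_sum_range (fun j => f (m + 1 - (j + 1))) m]
  conv_lhs => rw [← Finset.sum_range_reflect (fun j => f (j + 1)) m]
  refine Finset.sum_congr rfl (fun j hj => ?_)
  have := Finset.mem_range.1 hj
  congr 1
  omega

lemma p_nonneg (hval : ∀ n, 1 ≤ n → ∀ ω, ξ n ω = 0 ∨ ξ n ω = 1)
    {n : ℕ} (hn : 1 ≤ n) : 0 ≤ ∫ ω, ξ n ω ∂μ :=
  integral_nonneg (fun ω => by rcases hval n hn ω with h | h <;> simp [h])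

lemma p_le_one (hval : ∀ n, 1 ≤ n → ∀ ω, ξ n ω = 0 ∨ ξ n ω = 1)
    (hmeas : ∀ n, Measurable (ξ n)) {n : ℕ} (hn : 1 ≤ n) : ∫ ω, ξ n ω ∂μ ≤ 1 := by
  have h := integral_mono (μ := μ)
    (integrable_of_bdd (mΩ := mΩ) (hmeas n) (xi_abs_le_one hval hn))
    (integrable_const (1:ℝ))
    (fun ω => by rcases hval n hn ω with h | h <;> simp [h])
  simpa using h

lemma p_rec (hval : ∀ n, 1 ≤ n → ∀ ω, ξ n ω = 0 ∨ ξ n ω = 1)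
    (hmeas : ∀ n, Measurable (ξ n)) (ha_pos : ∀ i, 0 < a i)
    (hinit : μ {ω | ξ 1 ω = 1} = ENNReal.ofReal (a 0))
    (hcond : ∀ n, 2 ≤ n →
      μ[ξ n | ⨆ i ∈ Finset.Icc 1 (n - 1), MeasurableSpace.comap (ξ i) Real.measurableSpace]
        =ᵐ[μ] fun ω => a 0 + ∑ i ∈ Finset.Icc 1 (n - 1), a (n - i) * ξ i ω)
    (m : ℕ) :
    ∫ ω, ξ (m+1) ω ∂μ = a 0 + ∑ i ∈ Finset.Icc 1 m, a (m+1-i) * ∫ ω, ξ i ω ∂μ := by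
  have h := key_int (μ := μ) hval hmeas (ha_pos 0).le hinit hcond m (fun _ => (1:ℝ))
  simp only [one_mul] at h
  rw [h]
  have hint : ∀ i ∈ Finset.Icc 1 m, Integrable (fun ω => a (m+1-i) * ξ i ω) μ := by
    intro i hi
    have h1 := (Finset.mem_Icc.1 hi).1
    exact (integrable_of_bdd (mΩ := mΩ) (hmeas i) (xi_abs_le_one hval h1)).const_mul _
  calc ∫ ω, (a 0 + ∑ i ∈ Finset.Icc 1 m, a (m+1-i) * ξ i ω) ∂μ
      = ∫ _ω, (a 0 : ℝ) ∂μ + ∫ ω, ∑ i ∈ Finset.Icc 1 m, a (m+1-i) * ξ i ω ∂μ :=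
        integral_add (integrable_const _) (integrable_finset_sum _ hint)
    _ = a 0 + ∑ i ∈ Finset.Icc 1 m, ∫ ω, a (m+1-i) * ξ i ω ∂μ := by
        rw [integral_const, integral_finset_sum _ hint]
        simp [measure_univ]
    _ = a 0 + ∑ i ∈ Finset.Icc 1 m, a (m+1-i) * ∫ ω, ξ i ω ∂μ := by
        congr 1
        exact Finset.sum_congr rfl (fun i _ => integral_const_mul _ _)


lemma renewal_limit (a : ℕ → ℝ) (p : ℕ → ℝ) (ha_pos : ∀ i, 0 < a i) (ha_sum : Summable a)
    (ha_lt_one : ∑' i, a i < 1)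
    (hp0 : ∀ n, 1 ≤ n → 0 ≤ p n) (hp1 : ∀ n, 1 ≤ n → p n ≤ 1)
    (hrec : ∀ m : ℕ, p (m+1) = a 0 + ∑ i ∈ Finset.Icc 1 m, a (m+1-i) * p i) :
    Tendsto p atTop (𝓝 (a 0 / (1 - ∑' i, a (i+1)))) := by
  set A : ℝ := ∑' i, a (i+1) with hA
  set c : ℝ := a 0 / (1 - A) with hc
  have hsum1 : Summable (fun j : ℕ => a (j+1)) := (summable_nat_add_iff 1).2 ha_sum
  have htsum : ∑' i, a i = a 0 + A := Summable.tsum_eq_zero_add ha_sum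
  have hA0 : 0 ≤ A := tsum_nonneg (fun i => (ha_pos _).le)
  have h1A : 0 < 1 - A := by linarith [ha_pos 0]
  have hceq : c = a 0 + A * c := by
    have h1 : c * (1 - A) = a 0 := div_mul_cancel₀ _ (ne_of_gt h1A)
    nlinarith [h1]
  have hc0 : 0 < c := div_pos (ha_pos 0) h1A
  have hc1 : c ≤ 1 := by
    rw [hc, div_le_one h1A]
    linarith
  set R : ℕ → ℝ := fun K => ∑' j, a (j + K) with hR
  have hRdecomp : ∀ K, ∑ j ∈ Finset.range K, a (j+1) + R (K+1) = A := by
    intro K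
    have h : ∑ j ∈ Finset.range K, a (j+1) + ∑' j, a (j + (K+1)) = ∑' i, a (i+1) :=
      hsum1.sum_add_tsum_nat_add K
    rw [hA, hR]
    convert h using 3
  have hRnonneg : ∀ K, 0 ≤ R K := fun K => tsum_nonneg (fun j => (ha_pos _).le)
  have hIccK : ∀ K, ∑ k ∈ Finset.Icc 1 K, a k = ∑ j ∈ Finset.range K, a (j+1) := by
    intro K
    rw [sum_Icc_fin K a, Fin.sum_univ_eq_sum_range (fun j => a (j+1)) K]
  have hIcc_le_A : ∀ K, ∑ k ∈ Finset.Icc 1 K, a k ≤ A := by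
    intro K
    rw [hIccK K]
    linarith [hRdecomp K, hRnonneg (K+1)]
  have hRtend : Tendsto R atTop (𝓝 0) := by
    have h1 : Tendsto (fun K => ∑ j ∈ Finset.range K, a (j+1)) atTop (𝓝 A) :=
      hsum1.hasSum.tendsto_sum_nat
    have h2 : Tendsto (fun K => A - ∑ j ∈ Finset.range K, a (j+1)) atTop (𝓝 (A - A)) :=
      tendsto_const_nhds.sub h1
    have h3 : ∀ K, R (K+1) = A - ∑ j ∈ Finset.range K, a (j+1) := fun K => by
      linarith [hRdecomp K]
    have h4 : Tendsto (fun K => R (K+1)) atTop (𝓝 0) := by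
      have := h2.congr (fun K => (h3 K).symm)
      simpa using this
    exact (tendsto_add_atTop_iff_nat 1).1 h4
  set u : ℕ → ℝ := fun n => |p n - c| with hu
  have hub : ∀ n, 1 ≤ n → u n ≤ 2 := by
    intro n hn
    have h1 := hp0 n hn
    have h2 := hp1 n hn
    rw [hu]
    rw [abs_le]
    constructor <;> simp <;> nlinarith
  have hrec_abs : ∀ m : ℕ,
      u (m+1) ≤ (∑ k ∈ Finset.Icc 1 m, a k * u (m+1-k)) + c * R (m+1) := by
    intro m
    have h1 := hrec m
    have h2 : ∑ i ∈ Finset.Icc 1 m, a (m+1-i) * p i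
        = ∑ k ∈ Finset.Icc 1 m, a k * p (m+1-k) := by
      rw [sum_Icc_reflect m (fun i => a (m+1-i) * p i)]
      refine Finset.sum_congr rfl (fun k hk => ?_)
      obtain ⟨hk1, hk2⟩ := Finset.mem_Icc.1 hk
      have e : m + 1 - (m + 1 - k) = k := by omega
      rw [e]
    have e1 : ∑ k ∈ Finset.Icc 1 m, a k * (p (m+1-k) - c)
        = (∑ k ∈ Finset.Icc 1 m, a k * p (m+1-k)) - (∑ k ∈ Finset.Icc 1 m, a k) * c := by
      rw [Finset.sum_mul]
      rw [← Finset.sum_sub_distrib]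
      exact Finset.sum_congr rfl (fun k _ => by ring)
    have e2 : (∑ k ∈ Finset.Icc 1 m, a k) + R (m+1) = A := by
      rw [hIccK m]; exact hRdecomp m
    have hkey : p (m+1) - c
        = (∑ k ∈ Finset.Icc 1 m, a k * (p (m+1-k) - c)) - c * R (m+1) := by
      rw [e1]
      rw [h1, h2]
      nlinarith [hceq, e2]
    calc u (m+1) = |(∑ k ∈ Finset.Icc 1 m, a k * (p (m+1-k) - c)) - c * R (m+1)| := by
          show |p (m+1) - c| = _
          rw [hkey]
      _ ≤ |∑ k ∈ Finset.Icc 1 m, a k * (p (m+1-k) - c)| + |c * R (m+1)| := by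
          exact abs_sub _ _
      _ ≤ (∑ k ∈ Finset.Icc 1 m, |a k * (p (m+1-k) - c)|) + |c * R (m+1)| := by
          gcongr
          exact Finset.abs_sum_le_sum_abs _ _
      _ ≤ (∑ k ∈ Finset.Icc 1 m, a k * u (m+1-k)) + c * R (m+1) := by
          gcongr with k hk
          · rw [abs_mul, abs_of_nonneg (ha_pos k).le]
          · rw [abs_mul, abs_of_nonneg hc0.le, abs_of_nonneg (hRnonneg (m+1))]
  have hbddAbove : IsBoundedUnder (· ≤ ·) atTop u :=
    ⟨2, eventually_map.2 (by filter_upwards [eventually_ge_atTop 1] with n hn using hub n hn)⟩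
  have hbddBelow : IsBoundedUnder (· ≥ ·) atTop u :=
    ⟨0, eventually_map.2 (Eventually.of_forall (fun n => abs_nonneg _))⟩
  set U := limsup u atTop with hU
  have hU0 : 0 ≤ U :=
    le_limsup_of_frequently_le (Frequently.of_forall (fun n => abs_nonneg _)) hbddAbove
  have hUA : ∀ ε, 0 < ε → U ≤ A * U + ε * (A + 2 + c) := by
    intro ε hε
    have h1 : ∀ᶠ n in atTop, u n < U + ε :=
      eventually_lt_of_limsup_lt (by linarith) hbddAbove
    obtain ⟨N, hN⟩ := eventually_atTop.1 h1
    obtain ⟨K0, hK0⟩ := eventually_atTop.1 (hRtend.eventually_lt_const hε)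
    have h2 : ∀ᶠ n in atTop, u n ≤ A * (U + ε) + 2 * ε + c * ε := by
      refine eventually_atTop.2 ⟨N + K0 + 2, fun n hn => ?_⟩
      obtain ⟨m, rfl⟩ : ∃ m, n = m + 1 := ⟨n - 1, by omega⟩
      have hmK : K0 ≤ m := by omega
      have hm1 : 1 ≤ m := by omega
      -- split the sum
      have hunion : Finset.Icc 1 m = Finset.Icc 1 K0 ∪ Finset.Icc (K0+1) m := by
        ext x
        simp only [Finset.mem_Icc, Finset.mem_union]
        omega
      have hdisj : Disjoint (Finset.Icc 1 K0) (Finset.Icc (K0+1) m) := by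
        rw [Finset.disjoint_left]
        intro x hx1 hx2
        simp only [Finset.mem_Icc] at hx1 hx2
        omega
      have hsplit : ∑ k ∈ Finset.Icc 1 m, a k * u (m+1-k)
          = (∑ k ∈ Finset.Icc 1 K0, a k * u (m+1-k))
            + ∑ k ∈ Finset.Icc (K0+1) m, a k * u (m+1-k) := by
        rw [hunion, Finset.sum_union hdisj]
      have hpart1 : ∑ k ∈ Finset.Icc 1 K0, a k * u (m+1-k) ≤ A * (U + ε) := by
        have hterm : ∀ k ∈ Finset.Icc 1 K0, a k * u (m+1-k) ≤ a k * (U + ε) := by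
          intro k hk
          obtain ⟨hk1, hk2⟩ := Finset.mem_Icc.1 hk
          have : N ≤ m + 1 - k := by omega
          exact mul_le_mul_of_nonneg_left (hN _ this).le (ha_pos k).le
        calc ∑ k ∈ Finset.Icc 1 K0, a k * u (m+1-k)
            ≤ ∑ k ∈ Finset.Icc 1 K0, a k * (U + ε) := Finset.sum_le_sum hterm
          _ = (∑ k ∈ Finset.Icc 1 K0, a k) * (U + ε) := by rw [Finset.sum_mul]
          _ ≤ A * (U + ε) := by
              have := hIcc_le_A K0
              have hUε : 0 ≤ U + ε := by linarith
              exact mul_le_mul_of_nonneg_right this hUε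
      have hpart2 : ∑ k ∈ Finset.Icc (K0+1) m, a k * u (m+1-k) ≤ 2 * ε := by
        have hterm : ∀ k ∈ Finset.Icc (K0+1) m, a k * u (m+1-k) ≤ a k * 2 := by
          intro k hk
          obtain ⟨hk1, hk2⟩ := Finset.mem_Icc.1 hk
          have : 1 ≤ m + 1 - k := by omega
          exact mul_le_mul_of_nonneg_left (hub _ this) (ha_pos k).le
        have hsum_tail : ∑ k ∈ Finset.Icc (K0+1) m, a k ≤ R (K0 + 1) := by
          have e3 : (∑ k ∈ Finset.Icc 1 K0, a k) + ∑ k ∈ Finset.Icc (K0+1) m, a k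
              = ∑ k ∈ Finset.Icc 1 m, a k := by
            rw [hunion, Finset.sum_union hdisj]
          have e4 := hRdecomp K0
          have e5 := hRdecomp m
          rw [← hIccK K0] at e4
          rw [← hIccK m] at e5
          have e6 := hRnonneg (m+1)
          linarith
        have hRK : R (K0 + 1) ≤ ε := by
          have h7 : R (K0+1) < ε := hK0 (K0+1) (by omega)
          linarith
        calc ∑ k ∈ Finset.Icc (K0+1) m, a k * u (m+1-k)
            ≤ ∑ k ∈ Finset.Icc (K0+1) m, a k * 2 := Finset.sum_le_sum hterm
          _ = (∑ k ∈ Finset.Icc (K0+1) m, a k) * 2 := by rw [Finset.sum_mul]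
          _ ≤ ε * 2 := by
              refine mul_le_mul_of_nonneg_right ?_ (by norm_num)
              linarith
          _ = 2 * ε := by ring
      have hpart3 : c * R (m+1) ≤ c * ε := by
        have h8 : R (m+1) < ε := hK0 (m+1) (by omega)
        exact mul_le_mul_of_nonneg_left h8.le hc0.le
      have := hrec_abs m
      rw [hsplit] at this
      linarith
    have h9 : U ≤ A * (U + ε) + 2 * ε + c * ε :=
      limsup_le_of_le hbddBelow.isCoboundedUnder_le h2
    nlinarith
  have hUle : U ≤ A * U := by
    refine le_of_forall_pos_le_add (fun δ hδ => ?_)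
    have hpos : 0 < A + 2 + c := by linarith
    have := hUA (δ / (A + 2 + c)) (div_pos hδ hpos)
    rw [div_mul_cancel₀] at this
    · linarith
    · exact ne_of_gt hpos
  have hUzero : U = 0 := by nlinarith
  rw [Metric.tendsto_atTop]
  intro ε hε
  have h1 : ∀ᶠ n in atTop, u n < ε := eventually_lt_of_limsup_lt (by rw [← hU] at *; linarith [hUzero]) hbddAbove
  obtain ⟨N, hN⟩ := eventually_atTop.1 h1
  exact ⟨N, fun n hn => by rw [Real.dist_eq]; exact hN n hn⟩

end DTHP


open DTHP in
theorem dthp_mgf_ratio_liminf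
    {Ω : Type*} [MeasurableSpace Ω] (μ : Measure Ω) [IsProbabilityMeasure μ]
    (a : ℕ → ℝ) (ξ : ℕ → Ω → ℝ)
    (ha_pos : ∀ i, 0 < a i)
    (ha_sum : Summable a)
    (ha_lt_one : ∑' i, a i < 1)
    (ha_moment : Summable (fun i : ℕ => (i : ℝ) * a i))
    (hmeas : ∀ n, Measurable (ξ n))
    (hval : ∀ n, 1 ≤ n → ∀ ω, ξ n ω = 0 ∨ ξ n ω = 1)
    (hinit : μ {ω | ξ 1 ω = 1} = ENNReal.ofReal (a 0))
    (hcond : ∀ n, 2 ≤ n →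
      μ[ξ n | ⨆ i ∈ Finset.Icc 1 (n - 1), MeasurableSpace.comap (ξ i) Real.measurableSpace]
        =ᵐ[μ] fun ω => a 0 + ∑ i ∈ Finset.Icc 1 (n - 1), a (n - i) * ξ i ω)
    :
    ∀ t : ℝ,
      1 + (Real.exp t - 1) * (a 0 / (1 - ∑' i, a (i + 1))) ≤
        Filter.liminf
          (fun n : ℕ =>
            (∫ ω, Real.exp (t * ∑ i ∈ Finset.Icc 1 (n + 1), ξ i ω) ∂μ) /
              ∫ ω, Real.exp (t * ∑ i ∈ Finset.Icc 1 n, ξ i ω) ∂μ)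
          atTop := by
  intro t
  set φ : ℝ := Real.exp t - 1 with hφ
  set p : ℕ → ℝ := fun n => ∫ ω, ξ n ω ∂μ with hp
  set A : ℝ := ∑' i, a (i + 1) with hA
  set c : ℝ := a 0 / (1 - A) with hc
  set M : ℕ → ℝ := fun n => ∫ ω, Real.exp (t * ∑ i ∈ Finset.Icc 1 n, ξ i ω) ∂μ with hM
  -- basic facts about sums of ξ
  have hS0 : ∀ (n : ℕ) (ω : Ω), 0 ≤ ∑ i ∈ Finset.Icc 1 n, ξ i ω := by
    intro n ω
    refine Finset.sum_nonneg (fun i hi => ?_)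
    have h1 := (Finset.mem_Icc.1 hi).1
    rcases hval i h1 ω with h | h <;> simp [h]
  have hSn : ∀ (n : ℕ) (ω : Ω), ∑ i ∈ Finset.Icc 1 n, ξ i ω ≤ n := by
    intro n ω
    have h1 : ∀ i ∈ Finset.Icc 1 n, ξ i ω ≤ 1 := by
      intro i hi
      have h2 := (Finset.mem_Icc.1 hi).1
      rcases hval i h2 ω with h | h <;> simp [h]
    calc ∑ i ∈ Finset.Icc 1 n, ξ i ω ≤ ∑ i ∈ Finset.Icc 1 n, (1:ℝ) :=
          Finset.sum_le_sum h1
      _ = n := by simp [Nat.card_Icc]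
  -- exp as composition
  have hcomp : ∀ (n : ℕ) (ω : Ω), Real.exp (t * ∑ i ∈ Finset.Icc 1 n, ξ i ω)
      = (fun b : Fin n → Bool => Real.exp (t * ∑ j, bval (b j))) (bvec ξ n ω) := by
    intro n ω
    simp only
    congr 2
    rw [sum_Icc_fin n (fun i => ξ i ω)]
    exact Finset.sum_congr rfl (fun j _ => xi_eq_bval hval (by omega) ω)
  have hGint : ∀ n, Integrable (fun ω => Real.exp (t * ∑ i ∈ Finset.Icc 1 n, ξ i ω)) μ := by
    intro n
    obtain ⟨C, hC0, hC⟩ := comp_bound (ξ := ξ) (Ω := Ω)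
      (fun b : Fin n → Bool => Real.exp (t * ∑ j, bval (b j)))
    have hfun : (fun ω => Real.exp (t * ∑ i ∈ Finset.Icc 1 n, ξ i ω))
        = fun ω => (fun b : Fin n → Bool => Real.exp (t * ∑ j, bval (b j))) (bvec ξ n ω) :=
      funext (hcomp n)
    rw [hfun]
    exact integrable_of_bdd (meas_comp (fun i _ => hmeas i)
      (fun b : Fin n → Bool => Real.exp (t * ∑ j, bval (b j)))) hC
  have hEξint : ∀ n, Integrable
      (fun ω => Real.exp (t * ∑ i ∈ Finset.Icc 1 n, ξ i ω) * ξ (n+1) ω) μ := by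
    intro n
    obtain ⟨C, hC0, hC⟩ := comp_bound (ξ := ξ) (Ω := Ω)
      (fun b : Fin n → Bool => Real.exp (t * ∑ j, bval (b j)))
    have hfun : (fun ω => Real.exp (t * ∑ i ∈ Finset.Icc 1 n, ξ i ω) * ξ (n+1) ω)
        = fun ω => (fun b : Fin n → Bool => Real.exp (t * ∑ j, bval (b j))) (bvec ξ n ω)
            * ξ (n+1) ω := by
      funext ω
      rw [hcomp n ω]
    rw [hfun]
    refine integrable_of_bdd ((meas_comp (fun i _ => hmeas i)
      (fun b : Fin n → Bool => Real.exp (t * ∑ j, bval (b j)))).mul (hmeas (n+1)))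
      (C := C) (fun ω => ?_)
    calc |(fun b : Fin n → Bool => Real.exp (t * ∑ j, bval (b j))) (bvec ξ n ω) * ξ (n+1) ω|
        = |(fun b : Fin n → Bool => Real.exp (t * ∑ j, bval (b j))) (bvec ξ n ω)|
            * |ξ (n+1) ω| := abs_mul _ _
      _ ≤ C * 1 := mul_le_mul (hC ω) (xi_abs_le_one hval (by omega) ω) (abs_nonneg _) hC0
      _ = C := mul_one C
  have hξGint : ∀ n, ∀ i, 1 ≤ i → Integrable
      (fun ω => ξ i ω * Real.exp (t * ∑ j ∈ Finset.Icc 1 n, ξ j ω)) μ := by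
    intro n i hi
    have h := hEξint n
    -- reuse pattern
    obtain ⟨C, hC0, hC⟩ := comp_bound (ξ := ξ) (Ω := Ω)
      (fun b : Fin n → Bool => Real.exp (t * ∑ j, bval (b j)))
    have hfun : (fun ω => ξ i ω * Real.exp (t * ∑ j ∈ Finset.Icc 1 n, ξ j ω))
        = fun ω => ξ i ω
            * (fun b : Fin n → Bool => Real.exp (t * ∑ j, bval (b j))) (bvec ξ n ω) := by
      funext ω
      rw [hcomp n ω]
    rw [hfun]
    refine integrable_of_bdd ((hmeas i).mul (meas_comp (fun k _ => hmeas k)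
      (fun b : Fin n → Bool => Real.exp (t * ∑ j, bval (b j)))))
      (C := C) (fun ω => ?_)
    calc |ξ i ω * (fun b : Fin n → Bool => Real.exp (t * ∑ j, bval (b j))) (bvec ξ n ω)|
        = |ξ i ω| * |(fun b : Fin n → Bool => Real.exp (t * ∑ j, bval (b j))) (bvec ξ n ω)|
          := abs_mul _ _
      _ ≤ 1 * C := mul_le_mul (xi_abs_le_one hval hi ω) (hC ω) (abs_nonneg _) (by norm_num)
      _ = C := one_mul C
  have hMpos : ∀ n, 0 < M n := by
    intro n
    have hlow : ∀ ω, Real.exp (-(|t| * n)) ≤ Real.exp (t * ∑ i ∈ Finset.Icc 1 n, ξ i ω) := by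
      intro ω
      apply Real.exp_le_exp.2
      have h1 := hS0 n ω
      have h2 := hSn n ω
      have h3 : -|t| * (n:ℝ) ≤ -|t| * (∑ i ∈ Finset.Icc 1 n, ξ i ω) :=
        mul_le_mul_of_nonpos_left h2 (neg_nonpos.2 (abs_nonneg t))
      have h4 : -|t| * (∑ i ∈ Finset.Icc 1 n, ξ i ω) ≤ t * (∑ i ∈ Finset.Icc 1 n, ξ i ω) :=
        mul_le_mul_of_nonneg_right (neg_abs_le t) h1
      linarith
    have h5 := integral_mono (μ := μ) (integrable_const _) (hGint n) hlow
    have h6 : (0:ℝ) < Real.exp (-(|t| * n)) := Real.exp_pos _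
    have h7 : ∫ (_ω : Ω), Real.exp (-(|t| * n)) ∂μ = Real.exp (-(|t| * n)) := by
      simp [measure_univ]
    rw [h7] at h5
    exact lt_of_lt_of_le h6 h5
  -- correlation inequality from association
  have hss : ∀ (n : ℕ) (ω : Ω), (∑ j : Fin n, bval (bvec ξ n ω j))
      = ∑ i ∈ Finset.Icc 1 n, ξ i ω := by
    intro n ω
    rw [sum_Icc_fin n (fun i => ξ i ω)]
    exact (Finset.sum_congr rfl (fun j _ => xi_eq_bval hval (by omega) ω)).symm
  have hcorr : ∀ n, ∀ k ∈ Finset.Icc 1 n,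
      φ * (p k * M n)
        ≤ φ * ∫ ω, ξ k ω * Real.exp (t * ∑ i ∈ Finset.Icc 1 n, ξ i ω) ∂μ := by
    intro n k hk
    obtain ⟨hk1, hk2⟩ := Finset.mem_Icc.1 hk
    have hjlt : k - 1 < n := by omega
    have hbb : ∀ ω : Ω, bval (bvec ξ n ω ⟨k - 1, hjlt⟩) = ξ k ω := by
      intro ω
      show bval (decide (ξ ((k - 1) + 1) ω = 1)) = ξ k ω
      have e : (k - 1) + 1 = k := by omega
      rw [e]
      exact (xi_eq_bval hval hk1 ω).symm
    have hFkmono : Monotone (fun b : Fin n → Bool => bval (b ⟨k - 1, hjlt⟩)) :=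
      fun b b' h => bval_mono (h _)
    rcases le_total 0 t with ht | ht
    · have hφ0 : 0 ≤ φ := by
        rw [hφ]
        nlinarith [Real.add_one_le_exp t]
      have hGmono : Monotone (fun b : Fin n → Bool => Real.exp (t * ∑ j, bval (b j))) := by
        intro b b' hbb'
        apply Real.exp_le_exp.2
        exact mul_le_mul_of_nonneg_left
          (Finset.sum_le_sum (fun j _ => bval_mono (hbb' j))) ht
      have hassoc := assoc (μ := μ) hval hmeas ha_pos ha_sum ha_lt_one hinit hcond n
        (fun b : Fin n → Bool => bval (b ⟨k - 1, hjlt⟩))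
        (fun b : Fin n → Bool => Real.exp (t * ∑ j, bval (b j))) hFkmono hGmono
      simp only [hbb, hss] at hassoc
      have hgoal : (∫ ω, ξ k ω ∂μ) * (∫ ω, Real.exp (t * ∑ i ∈ Finset.Icc 1 n, ξ i ω) ∂μ)
          = p k * M n := rfl
      rw [hgoal] at hassoc
      exact mul_le_mul_of_nonneg_left hassoc hφ0
    · have hφ0 : φ ≤ 0 := by
        rw [hφ]
        have h1 : Real.exp t ≤ Real.exp 0 := Real.exp_le_exp.2 ht
        rw [Real.exp_zero] at h1
        linarith
      have hGmono : Monotone (fun b : Fin n → Bool =>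
          -(Real.exp (t * ∑ j, bval (b j)))) := by
        intro b b' hbb'
        simp only [neg_le_neg_iff]
        apply Real.exp_le_exp.2
        exact mul_le_mul_of_nonpos_left
          (Finset.sum_le_sum (fun j _ => bval_mono (hbb' j))) ht
      have hassoc := assoc (μ := μ) hval hmeas ha_pos ha_sum ha_lt_one hinit hcond n
        (fun b : Fin n → Bool => bval (b ⟨k - 1, hjlt⟩))
        (fun b : Fin n → Bool => -(Real.exp (t * ∑ j, bval (b j)))) hFkmono hGmono
      simp only [hbb, hss, mul_neg] at hassoc
      rw [integral_neg, integral_neg] at hassoc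
      have hgoal : (∫ ω, ξ k ω ∂μ) = p k := rfl
      have hgoal2 : (∫ ω, Real.exp (t * ∑ i ∈ Finset.Icc 1 n, ξ i ω) ∂μ) = M n := rfl
      rw [hgoal, hgoal2] at hassoc
      have h8 : ∫ ω, ξ k ω * Real.exp (t * ∑ i ∈ Finset.Icc 1 n, ξ i ω) ∂μ ≤ p k * M n := by
        nlinarith [hassoc]
      exact mul_le_mul_of_nonpos_left h8 hφ0
  -- step identity
  have hstep : ∀ n, M (n+1)
      = M n + φ * ∫ ω, Real.exp (t * ∑ i ∈ Finset.Icc 1 n, ξ i ω) * ξ (n+1) ω ∂μ := by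
    intro n
    have hpt : ∀ ω, Real.exp (t * ∑ i ∈ Finset.Icc 1 (n+1), ξ i ω)
        = Real.exp (t * ∑ i ∈ Finset.Icc 1 n, ξ i ω)
          + φ * (Real.exp (t * ∑ i ∈ Finset.Icc 1 n, ξ i ω) * ξ (n+1) ω) := by
      intro ω
      have hsum : ∑ i ∈ Finset.Icc 1 (n+1), ξ i ω
          = (∑ i ∈ Finset.Icc 1 n, ξ i ω) + ξ (n+1) ω :=
        Finset.sum_Icc_succ_top (by omega) _
      rcases hval (n+1) (by omega) ω with h | h
      · rw [hsum, h]
        simp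
      · rw [hsum, h, mul_add, Real.exp_add, mul_one, hφ]
        ring
    have hfun : (fun ω => Real.exp (t * ∑ i ∈ Finset.Icc 1 (n+1), ξ i ω))
        = fun ω => Real.exp (t * ∑ i ∈ Finset.Icc 1 n, ξ i ω)
          + φ * (Real.exp (t * ∑ i ∈ Finset.Icc 1 n, ξ i ω) * ξ (n+1) ω) := funext hpt
    show (∫ ω, Real.exp (t * ∑ i ∈ Finset.Icc 1 (n+1), ξ i ω) ∂μ) = _
    rw [hfun, integral_add (hGint n) ((hEξint n).const_mul φ), integral_const_mul]
  -- tower property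
  have htower : ∀ n, ∫ ω, Real.exp (t * ∑ i ∈ Finset.Icc 1 n, ξ i ω) * ξ (n+1) ω ∂μ
      = a 0 * M n + ∑ i ∈ Finset.Icc 1 n, a (n+1-i)
          * ∫ ω, ξ i ω * Real.exp (t * ∑ j ∈ Finset.Icc 1 n, ξ j ω) ∂μ := by
    intro n
    have h1 := key_int (μ := μ) hval hmeas (ha_pos 0).le hinit hcond n
      (fun b : Fin n → Bool => Real.exp (t * ∑ j, bval (b j)))
    have hfun1 : (fun ω => (fun b : Fin n → Bool =>
          Real.exp (t * ∑ j, bval (b j))) (bvec ξ n ω) * ξ (n+1) ω)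
        = fun ω => Real.exp (t * ∑ i ∈ Finset.Icc 1 n, ξ i ω) * ξ (n+1) ω := by
      funext ω
      rw [← hcomp n ω]
    have hfun2 : (fun ω => (fun b : Fin n → Bool =>
          Real.exp (t * ∑ j, bval (b j))) (bvec ξ n ω)
            * (a 0 + ∑ i ∈ Finset.Icc 1 n, a (n+1-i) * ξ i ω))
        = fun ω => a 0 * Real.exp (t * ∑ i ∈ Finset.Icc 1 n, ξ i ω)
            + ∑ i ∈ Finset.Icc 1 n, a (n+1-i)
              * (ξ i ω * Real.exp (t * ∑ j ∈ Finset.Icc 1 n, ξ j ω)) := by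
      funext ω
      rw [← hcomp n ω, mul_add]
      congr 1
      · ring
      · rw [Finset.mul_sum]
        exact Finset.sum_congr rfl (fun i _ => by ring)
    rw [hfun1, hfun2] at h1
    rw [h1]
    have hint : ∀ i ∈ Finset.Icc 1 n, Integrable
        (fun ω => a (n+1-i) * (ξ i ω * Real.exp (t * ∑ j ∈ Finset.Icc 1 n, ξ j ω))) μ := by
      intro i hi
      exact (hξGint n i (Finset.mem_Icc.1 hi).1).const_mul _
    rw [integral_add ((hGint n).const_mul (a 0)) (integrable_finset_sum _ hint),
      integral_const_mul, integral_finset_sum _ hint]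
    congr 1
    exact Finset.sum_congr rfl (fun i _ => integral_const_mul _ _)
  -- main per-n inequality
  have hmain : ∀ n, (1 + φ * p (n+1)) * M n ≤ M (n+1) := by
    intro n
    have hprec : p (n+1) = a 0 + ∑ i ∈ Finset.Icc 1 n, a (n+1-i) * p i :=
      p_rec (μ := μ) hval hmeas ha_pos hinit hcond n
    have hterm : ∀ i ∈ Finset.Icc 1 n,
        φ * (a (n+1-i) * (p i * M n))
          ≤ φ * (a (n+1-i) * ∫ ω, ξ i ω
              * Real.exp (t * ∑ j ∈ Finset.Icc 1 n, ξ j ω) ∂μ) := by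
      intro i hi
      have h := hcorr n i hi
      calc φ * (a (n+1-i) * (p i * M n)) = a (n+1-i) * (φ * (p i * M n)) := by ring
        _ ≤ a (n+1-i) * (φ * ∫ ω, ξ i ω
            * Real.exp (t * ∑ j ∈ Finset.Icc 1 n, ξ j ω) ∂μ) :=
          mul_le_mul_of_nonneg_left h (ha_pos _).le
        _ = φ * (a (n+1-i) * ∫ ω, ξ i ω
            * Real.exp (t * ∑ j ∈ Finset.Icc 1 n, ξ j ω) ∂μ) := by ring
    have hsum := Finset.sum_le_sum hterm
    have e2 : ∑ i ∈ Finset.Icc 1 n, φ * (a (n+1-i) * (p i * M n))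
        = (∑ i ∈ Finset.Icc 1 n, a (n+1-i) * p i) * (φ * M n) := by
      rw [Finset.sum_mul]
      exact Finset.sum_congr rfl (fun i _ => by ring)
    have e : (1 + φ * p (n+1)) * M n
        = M n + (φ * (a 0 * M n) + ∑ i ∈ Finset.Icc 1 n, φ * (a (n+1-i) * (p i * M n))) := by
      rw [hprec, e2]
      ring
    have e3 : φ * (a 0 * M n + ∑ i ∈ Finset.Icc 1 n, a (n+1-i)
          * ∫ ω, ξ i ω * Real.exp (t * ∑ j ∈ Finset.Icc 1 n, ξ j ω) ∂μ)
        = φ * (a 0 * M n) + ∑ i ∈ Finset.Icc 1 n, φ * (a (n+1-i)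
          * ∫ ω, ξ i ω * Real.exp (t * ∑ j ∈ Finset.Icc 1 n, ξ j ω) ∂μ) := by
      rw [mul_add, Finset.mul_sum]
    rw [hstep n, htower n, e3, e]
    linarith [hsum]
  have hratio : ∀ n, 1 + φ * p (n+1) ≤ M (n+1) / M n :=
    fun n => (le_div_iff₀ (hMpos n)).2 (hmain n)
  -- convergence of p
  have hp_tendsto : Tendsto p atTop (𝓝 c) :=
    renewal_limit a p ha_pos ha_sum ha_lt_one
      (fun n hn => p_nonneg (μ := μ) hval hn)
      (fun n hn => p_le_one (μ := μ) hval hmeas hn)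
      (fun m => p_rec (μ := μ) hval hmeas ha_pos hinit hcond m)
  have hv : Tendsto (fun n => 1 + φ * p (n+1)) atTop (𝓝 (1 + φ * c)) := by
    have h1 : Tendsto (fun n : ℕ => p (n+1)) atTop (𝓝 c) :=
      hp_tendsto.comp (tendsto_add_atTop_nat 1)
    exact ((h1.const_mul φ).const_add 1)
  have hpb : ∀ n : ℕ, |φ * p (n+1)| ≤ |φ| := by
    intro n
    rw [abs_mul]
    have h1 := p_nonneg (μ := μ) hval (show 1 ≤ n+1 by omega)
    have h2 := p_le_one (μ := μ) hval hmeas (show 1 ≤ n+1 by omega)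
    have h3 : |p (n+1)| ≤ 1 := abs_le.2 ⟨by linarith, h2⟩
    calc |φ| * |p (n+1)| ≤ |φ| * 1 := mul_le_mul_of_nonneg_left h3 (abs_nonneg _)
      _ = |φ| := mul_one _
  have hub2 : ∀ n, M (n+1) / M n ≤ max 1 (Real.exp t) := by
    intro n
    rw [div_le_iff₀ (hMpos n)]
    have hpt : ∀ ω, Real.exp (t * ∑ i ∈ Finset.Icc 1 (n+1), ξ i ω)
        ≤ max 1 (Real.exp t) * Real.exp (t * ∑ i ∈ Finset.Icc 1 n, ξ i ω) := by
      intro ω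
      have hsum : ∑ i ∈ Finset.Icc 1 (n+1), ξ i ω
          = (∑ i ∈ Finset.Icc 1 n, ξ i ω) + ξ (n+1) ω :=
        Finset.sum_Icc_succ_top (by omega) _
      rcases hval (n+1) (by omega) ω with h | h
      · rw [hsum, h, add_zero]
        exact le_mul_of_one_le_left (Real.exp_pos _).le (le_max_left _ _)
      · rw [hsum, h, mul_add, Real.exp_add, mul_one, mul_comm]
        exact mul_le_mul_of_nonneg_right (le_max_right _ _) (Real.exp_pos _).le
    have h1 := integral_mono (μ := μ) (hGint (n+1))
      ((hGint n).const_mul (max 1 (Real.exp t))) hpt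
    rwa [integral_const_mul] at h1
  have hu' : IsBoundedUnder (· ≥ ·) atTop (fun n => 1 + φ * p (n+1)) := by
    refine ⟨1 - |φ|, eventually_map.2 (Eventually.of_forall (fun n => ?_))⟩
    have h1 := hpb n
    have h2 := neg_abs_le (φ * p (n+1))
    show 1 + φ * p (n+1) ≥ 1 - |φ|
    linarith
  have hv' : IsCoboundedUnder (· ≥ ·) atTop (fun n : ℕ => M (n+1) / M n) :=
    IsBoundedUnder.isCoboundedUnder_ge
      ⟨max 1 (Real.exp t), eventually_map.2 (Eventually.of_forall hub2)⟩
  have hliminf : liminf (fun n => 1 + φ * p (n+1)) atTop = 1 + φ * c := hv.liminf_eq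
  have hfinal : 1 + φ * c ≤ liminf (fun n : ℕ => M (n+1) / M n) atTop := by
    rw [← hliminf]
    exact liminf_le_liminf (Eventually.of_forall hratio) hu' hv'
  exact hfinal
end

section
/- For the discrete-time surplus process U_n = u + n·p − H_n with initial surplus u ∈ (0,1) and constant premium p ∈ (0,1), the limit lim_{n→∞} 𝔼(U_n)/n exists and equals p − a_0/(1 − Σ_{i=1}^∞ a_i); in particular, lim_{n→∞} 𝔼(U_n)/n > 0 if and only if p > a_0/(1 − Σ_{i=1}^∞ a_i). -/
open Filter Topology Finset

lemma dthp_aux_analysis (a m : ℕ → ℝ)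
    (ha_pos : ∀ i, 0 < a i) (ha_sum : Summable a) (ha_lt_one : ∑' i, a i < 1)
    (hm1 : m 1 = a 0)
    (hmrec : ∀ n, 2 ≤ n → m n = a 0 + ∑ i ∈ Finset.Icc 1 (n-1), a (n-i) * m i)
    (hm0 : ∀ n, 1 ≤ n → 0 ≤ m n) (hmle : ∀ n, 1 ≤ n → m n ≤ 1) :
    Tendsto (fun n : ℕ => (∑ i ∈ Finset.Icc 1 n, m i)/n) atTop
      (𝓝 (a 0 / (1 - ∑' i, a (i+1)))) := by
  set A : ℝ := ∑' i, a (i+1) with hA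
  have hsum' : Summable (fun i => a (i+1)) := (summable_nat_add_iff 1).2 ha_sum
  have htot : ∑' i, a i = a 0 + A := by
    rw [hA, Summable.tsum_eq_zero_add ha_sum]
  have hA_nonneg : 0 ≤ A := tsum_nonneg (fun i => (ha_pos _).le)
  have hA_lt : A < 1 := by nlinarith [ha_pos 0, htot, ha_lt_one]
  have h1A : (0:ℝ) < 1 - A := by linarith
  set P : ℕ → ℝ := fun k => ∑ j ∈ Finset.range k, a (j+1) with hP
  set S : ℕ → ℝ := fun n => ∑ i ∈ Finset.Icc 1 n, m i with hS
  have hPle : ∀ k, P k ≤ A := fun k => Summable.sum_le_tsum _ (fun i _ => (ha_pos _).le) hsum'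
  have hsplit : ∀ (n : ℕ), 1 ≤ n → ∀ (f : ℕ → ℝ),
      ∑ i ∈ Finset.Icc 1 n, f i = ∑ i ∈ Finset.Icc 1 (n-1), f i + f n := by
    intro n hn f
    have h := Finset.sum_Icc_succ_top (show 1 ≤ (n-1)+1 by omega) f
    rwa [show (n-1)+1 = n by omega] at h
  -- key identity
  have key : ∀ n : ℕ, 1 ≤ n → S n = n * a 0 + ∑ i ∈ Finset.Icc 1 (n-1), m i * P (n - i) := by
    intro n hn
    induction n, hn using Nat.le_induction with
    | base => simp [hS, hm1, hP]
    | succ n hn ih =>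
      have h1 : S (n+1) = S n + m (n+1) := by simpa using hsplit (n+1) (by omega) m
      have h2 : m (n+1) = a 0 + ∑ i ∈ Finset.Icc 1 n, a (n+1-i) * m i :=
        (by simpa using hmrec (n+1) (by omega))
      have h3 : ∀ i ∈ Finset.Icc 1 n, m i * P (n+1-i) = m i * P (n-i) + a (n+1-i) * m i := by
        intro i hi
        simp only [Finset.mem_Icc] at hi
        have e1 : n + 1 - i = (n - i) + 1 := by omega
        have e2 : P ((n-i)+1) = P (n-i) + a ((n-i)+1) := Finset.sum_range_succ (fun j => a (j+1)) (n-i)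
        rw [e1, e2]; ring
      have h4 : ∑ i ∈ Finset.Icc 1 n, m i * P (n+1-i)
          = ∑ i ∈ Finset.Icc 1 (n-1), m i * P (n-i) + ∑ i ∈ Finset.Icc 1 n, a (n+1-i) * m i := by
        rw [Finset.sum_congr rfl h3, Finset.sum_add_distrib]
        congr 1
        rw [hsplit n hn (fun i => m i * P (n-i))]
        simp [hP]
      rw [h1, ih, h2]
      have hn1 : (n:ℕ) + 1 - 1 = n := by omega
      rw [hn1, h4]
      push_cast
      ring
  -- the (1-A) identity
  have key2 : ∀ n : ℕ, 1 ≤ n → S n / n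
      = (a 0 - (∑ i ∈ Finset.Icc 1 (n-1), m i * (A - P (n - i)))/n - A * m n / n) / (1 - A) := by
    intro n hn
    have hSn : S n = ∑ i ∈ Finset.Icc 1 (n-1), m i + m n := hsplit n hn m
    have hsum_eq : ∑ i ∈ Finset.Icc 1 (n-1), m i * P (n-i) - A * ∑ i ∈ Finset.Icc 1 (n-1), m i
        = - ∑ i ∈ Finset.Icc 1 (n-1), m i * (A - P (n-i)) := by
      rw [Finset.mul_sum, ← Finset.sum_sub_distrib, ← Finset.sum_neg_distrib]
      exact Finset.sum_congr rfl (fun i _ => by ring)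
    have hid : (1 - A) * S n
        = n * a 0 - (∑ i ∈ Finset.Icc 1 (n-1), m i * (A - P (n - i))) - A * m n := by
      have e1 : (1 - A) * S n = S n - A * (∑ i ∈ Finset.Icc 1 (n-1), m i + m n) := by
        rw [← hSn]; ring
      rw [e1, key n hn, mul_add]
      linarith [hsum_eq]
    have hnpos : (0:ℝ) < n := by exact_mod_cast hn
    have hSval : S n = (n * a 0 - (∑ i ∈ Finset.Icc 1 (n-1), m i * (A - P (n - i))) - A * m n) / (1-A) := by
      rw [eq_div_iff h1A.ne']
      linarith [hid]
    rw [hSval]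
    field_simp
  -- error terms tend to zero
  have hf0 : Tendsto (fun k => A - P k) atTop (𝓝 0) := by
    have h := hsum'.hasSum.tendsto_sum_nat.const_sub A
    rw [← hA, sub_self] at h; exact h
  have hces : Tendsto (fun n : ℕ => (∑ k ∈ Finset.range n, (A - P k)) / n) atTop (𝓝 0) := by
    have := hf0.cesaro
    simpa [div_eq_inv_mul] using this
  have hEbound : ∀ n : ℕ, 1 ≤ n →
      (∑ i ∈ Finset.Icc 1 (n-1), m i * (A - P (n - i))) ≤ ∑ k ∈ Finset.range n, (A - P k) := by
    intro n hn
    have step1 : (∑ i ∈ Finset.Icc 1 (n-1), m i * (A - P (n - i)))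
        ≤ ∑ i ∈ Finset.Icc 1 (n-1), (A - P (n - i)) := by
      apply Finset.sum_le_sum
      intro i hi
      simp only [Finset.mem_Icc] at hi
      have h1 : 0 ≤ A - P (n-i) := by linarith [hPle (n-i)]
      nlinarith [hm0 i hi.1, hmle i hi.1]
    have step2 : ∑ i ∈ Finset.Icc 1 (n-1), (A - P (n - i))
        = ∑ k ∈ Finset.Icc 1 (n-1), (A - P k) := by
      refine Finset.sum_nbij' (fun i => n - i) (fun k => n - k)
        (fun i hi => ?_) (fun k hk => ?_) (fun i hi => ?_) (fun k hk => ?_) (fun i hi => rfl) <;>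
      · simp only [Finset.mem_Icc] at *
        omega
    have step3 : ∑ k ∈ Finset.Icc 1 (n-1), (A - P k) ≤ ∑ k ∈ Finset.range n, (A - P k) := by
      apply Finset.sum_le_sum_of_subset_of_nonneg
      · intro k hk
        simp only [Finset.mem_Icc] at hk
        simp only [Finset.mem_range]
        omega
      · intro k _ _
        linarith [hPle k]
    linarith
  have hEnonneg : ∀ n : ℕ, 0 ≤ ∑ i ∈ Finset.Icc 1 (n-1), m i * (A - P (n - i)) := by
    intro n
    apply Finset.sum_nonneg
    intro i hi
    simp only [Finset.mem_Icc] at hi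
    exact mul_nonneg (hm0 i hi.1) (by linarith [hPle (n-i)])
  have hE : Tendsto (fun n : ℕ => (∑ i ∈ Finset.Icc 1 (n-1), m i * (A - P (n - i)))/n) atTop (𝓝 0) := by
    apply squeeze_zero' (g := fun n : ℕ => (∑ k ∈ Finset.range n, (A - P k)) / n) ?_ ?_ hces
    · filter_upwards with n
      exact div_nonneg (hEnonneg n) (Nat.cast_nonneg n)
    · filter_upwards [eventually_ge_atTop 1] with n hn
      have hnpos : (0:ℝ) < n := by exact_mod_cast hn
      exact (div_le_div_iff_of_pos_right hnpos).mpr (hEbound n hn)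
  have hm_div : Tendsto (fun n : ℕ => A * m n / n) atTop (𝓝 0) := by
    apply squeeze_zero' (g := fun n : ℕ => A / n) ?_ ?_ (tendsto_const_div_atTop_nhds_zero_nat A)
    · filter_upwards [eventually_ge_atTop 1] with n hn
      exact div_nonneg (mul_nonneg hA_nonneg (hm0 n hn)) (Nat.cast_nonneg n)
    · filter_upwards [eventually_ge_atTop 1] with n hn
      have hnpos : (0:ℝ) < n := by exact_mod_cast hn
      apply (div_le_div_iff_of_pos_right hnpos).mpr
      nlinarith [hmle n hn, hm0 n hn]
  have main : Tendsto (fun n : ℕ =>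
      (a 0 - (∑ i ∈ Finset.Icc 1 (n-1), m i * (A - P (n - i)))/n - A * m n / n) / (1 - A)) atTop
      (𝓝 (a 0/(1-A))) := by
    have h := ((tendsto_const_nhds (x := a 0) (f := atTop)).sub hE).sub hm_div
    simpa using h.div_const (1-A)
  apply main.congr'
  filter_upwards [eventually_ge_atTop 1] with n hn
  exact (key2 n hn).symm
open MeasureTheory Filter Topology Set

theorem dthp_surplus_mean_limit
    {Ω : Type*} [MeasurableSpace Ω] (μ : Measure Ω) [IsProbabilityMeasure μ]
    (a : ℕ → ℝ) (ξ : ℕ → Ω → ℝ)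
    (ha_pos : ∀ i, 0 < a i)
    (ha_sum : Summable a)
    (ha_lt_one : ∑' i, a i < 1)
    (ha_moment : Summable (fun i : ℕ => (i : ℝ) * a i))
    (hmeas : ∀ n, Measurable (ξ n))
    (hval : ∀ n, 1 ≤ n → ∀ ω, ξ n ω = 0 ∨ ξ n ω = 1)
    (hinit : μ {ω | ξ 1 ω = 1} = ENNReal.ofReal (a 0))
    (hcond : ∀ n, 2 ≤ n →
      μ[ξ n | ⨆ i ∈ Finset.Icc 1 (n - 1), MeasurableSpace.comap (ξ i) Real.measurableSpace]
        =ᵐ[μ] fun ω => a 0 + ∑ i ∈ Finset.Icc 1 (n - 1), a (n - i) * ξ i ω)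
    (u p : ℝ) (hu : u ∈ Set.Ioo (0 : ℝ) 1) (hp : p ∈ Set.Ioo (0 : ℝ) 1)
    (U : ℕ → Ω → ℝ)
    (hU : ∀ n, 1 ≤ n → ∀ ω, U n ω = u + n * p - ∑ i ∈ Finset.Icc 1 n, ξ i ω)
    :
    Tendsto (fun n : ℕ => (∫ ω, U n ω ∂μ) / n) atTop
      (𝓝 (p - a 0 / (1 - ∑' i, a (i + 1)))) ∧
    (0 < p - a 0 / (1 - ∑' i, a (i + 1)) ↔ a 0 / (1 - ∑' i, a (i + 1)) < p) := by
  constructor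
  · set m : ℕ → ℝ := fun n => ∫ ω, ξ n ω ∂μ with hm
    have hint : ∀ n, 1 ≤ n → Integrable (ξ n) μ := by
      intro n hn
      refine Integrable.mono' (integrable_const (1:ℝ)) (hmeas n).aestronglyMeasurable
        (ae_of_all μ fun ω => ?_)
      rcases hval n hn ω with h | h <;> simp [h]
    have hm0 : ∀ n, 1 ≤ n → 0 ≤ m n := by
      intro n hn
      apply integral_nonneg
      intro ω
      rcases hval n hn ω with h | h <;> simp [h]
    have hmle : ∀ n, 1 ≤ n → m n ≤ 1 := by
      intro n hn
      calc m n ≤ ∫ _, (1:ℝ) ∂μ := by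
            apply integral_mono (hint n hn) (integrable_const 1)
            intro ω
            rcases hval n hn ω with h | h <;> simp [h]
        _ = 1 := by simp
    have hm1 : m 1 = a 0 := by
      have hset : MeasurableSet {ω | ξ 1 ω = 1} := hmeas 1 (measurableSet_singleton 1)
      have hxi1 : ξ 1 = Set.indicator {ω | ξ 1 ω = 1} (fun _ => (1:ℝ)) := by
        funext ω
        rcases hval 1 le_rfl ω with h | h <;>
          simp [Set.indicator_apply, Set.mem_setOf_eq, h]
      have : m 1 = ∫ ω, Set.indicator {ω | ξ 1 ω = 1} (fun _ => (1:ℝ)) ω ∂μ :=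
        integral_congr_ae (ae_of_all μ fun ω => congrFun hxi1 ω)
      rw [this, integral_indicator_const (1:ℝ) hset, measureReal_def, hinit, smul_eq_mul, mul_one,
        ENNReal.toReal_ofReal (ha_pos 0).le]
    have hmrec : ∀ n, 2 ≤ n → m n = a 0 + ∑ i ∈ Finset.Icc 1 (n-1), a (n-i) * m i := by
      intro n hn
      have hle : (⨆ i ∈ Finset.Icc 1 (n - 1), MeasurableSpace.comap (ξ i) Real.measurableSpace)
          ≤ (inferInstance : MeasurableSpace Ω) :=
        iSup₂_le fun i _ => measurable_iff_comap_le.1 (hmeas i)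
      have h1 : m n = ∫ ω, (a 0 + ∑ i ∈ Finset.Icc 1 (n-1), a (n-i) * ξ i ω) ∂μ := by
        rw [hm]
        simp only
        rw [← integral_condExp hle (f := ξ n)]
        exact integral_congr_ae (hcond n hn)
      rw [h1]
      have hint' : ∀ i ∈ Finset.Icc 1 (n-1), Integrable (fun ω => a (n-i) * ξ i ω) μ := by
        intro i hi
        simp only [Finset.mem_Icc] at hi
        exact (hint i hi.1).const_mul _
      rw [integral_add (integrable_const _) (integrable_finset_sum _ hint'),
        integral_const, measureReal_def, measure_univ, ENNReal.toReal_one, smul_eq_mul, one_mul,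
        integral_finset_sum _ hint']
      congr 1
      exact Finset.sum_congr rfl fun i _ => integral_const_mul _ _
    have hS : Tendsto (fun n : ℕ => (∑ i ∈ Finset.Icc 1 n, m i)/n) atTop
        (𝓝 (a 0 / (1 - ∑' i, a (i+1)))) :=
      dthp_aux_analysis a m ha_pos ha_sum ha_lt_one hm1 hmrec hm0 hmle
    have hUint : ∀ n : ℕ, 1 ≤ n →
        (∫ ω, U n ω ∂μ) = u + n * p - ∑ i ∈ Finset.Icc 1 n, m i := by
      intro n hn
      have hint' : ∀ i ∈ Finset.Icc 1 n, Integrable (ξ i) μ := by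
        intro i hi
        simp only [Finset.mem_Icc] at hi
        exact hint i hi.1
      rw [integral_congr_ae (ae_of_all μ (hU n hn)),
        integral_sub (integrable_const _) (integrable_finset_sum _ hint'),
        integral_const, measureReal_def, measure_univ, ENNReal.toReal_one, one_smul,
        integral_finset_sum _ hint']
    have hfinal : Tendsto (fun n : ℕ => (u + n * p - ∑ i ∈ Finset.Icc 1 n, m i)/n) atTop
        (𝓝 (p - a 0 / (1 - ∑' i, a (i+1)))) := by
      have h1 : Tendsto (fun n : ℕ => u/n + p - (∑ i ∈ Finset.Icc 1 n, m i)/n) atTop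
          (𝓝 (0 + p - a 0 / (1 - ∑' i, a (i+1)))) :=
        (((tendsto_const_div_atTop_nhds_zero_nat u).add_const p)).sub hS
      rw [zero_add] at h1
      apply h1.congr'
      filter_upwards [eventually_ge_atTop 1] with n hn
      have hn0 : (n:ℝ) ≠ 0 := by positivity
      field_simp
    apply hfinal.congr'
    filter_upwards [eventually_ge_atTop 1] with n hn
    rw [hUint n hn]
  · exact sub_pos
end
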